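/- arXiv:2004.02598 — 5 statements merged into one kernel-verified Lean document; each statement's English description precedes it below -/
import Mathlib

section
/- Let n ≥ 2 and let 𝒰 ⊂ ℂ^n be a nonempty bounded monomial polyhedron defined by a matrix B ∈ M_n(ℤ). Then det B ≠ 0, and after possibly switching two rows of B (an operation that does not change 𝒰) one has det B > 0 and B^{-1} ⪰ 0 entrywise; equivalently, the adjugate matrix adj B has all entries nonnegative. -/
open MeasureTheory Complex
open scoped ENNReal NNReal

noncomputable section

/-- The monomial polyhedron associated to a rational matrix `B`: the set of `z` in `ℂⁿ` such
that for each row `j`, the monomial `∏ k, |z k| ^ (B j k)` is defined (no zero raised to a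
negative power) and is `< 1`. -/
def monomialPolyhedron {n : ℕ} (B : Matrix (Fin n) (Fin n) ℚ) : Set (Fin n → ℂ) :=
  {z | ∀ j : Fin n, (∀ k, B j k < 0 → z k ≠ 0) ∧
    ∏ k, ‖z k‖ ^ (B j k : ℝ) < 1}

namespace MonomialPolyhedronAux

open Matrix

variable {n : ℕ}

/-- Points `exp x` with `B x < 0` entrywise lie in the monomial polyhedron. -/
lemma mem_poly_of_strict (B : Matrix (Fin n) (Fin n) ℤ) (x : Fin n → ℝ)
    (hx : ∀ j, ∑ k, (B j k : ℝ) * x k < 0) :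
    (fun k => ((Real.exp (x k) : ℝ) : ℂ)) ∈ monomialPolyhedron (B.map (Int.cast : ℤ → ℚ)) := by
  simp only [monomialPolyhedron, Set.mem_setOf_eq]
  intro j
  refine ⟨fun k _ => by simp [(Real.exp_pos (x k)).ne'], ?_⟩
  have hterm : ∀ k : Fin n,
      ‖((Real.exp (x k) : ℝ) : ℂ)‖ ^ (((B.map (Int.cast : ℤ → ℚ)) j k : ℝ))
        = Real.exp ((B j k : ℝ) * x k) := by
    intro k
    rw [Complex.norm_real, Real.norm_eq_abs, abs_of_pos (Real.exp_pos _), Matrix.map_apply, Rat.cast_intCast,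
      Real.rpow_def_of_pos (Real.exp_pos _), Real.log_exp, mul_comm]
  calc ∏ k, ‖((Real.exp (x k) : ℝ) : ℂ)‖ ^ (((B.map (Int.cast : ℤ → ℚ)) j k : ℝ))
      = ∏ k, Real.exp ((B j k : ℝ) * x k) := Finset.prod_congr rfl (fun k _ => hterm k)
    _ = Real.exp (∑ k, (B j k : ℝ) * x k) := (Real.exp_sum _ _).symm
    _ < 1 := Real.exp_lt_one_iff.2 (hx j)

/-- The key structural lemma: nonemptiness and boundedness force `det B ≠ 0` and
entrywise nonnegativity of the real inverse. -/
lemma key (B : Matrix (Fin n) (Fin n) ℤ)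
    (hne : (monomialPolyhedron (B.map (Int.cast : ℤ → ℚ))).Nonempty)
    (hbnd : Bornology.IsBounded (monomialPolyhedron (B.map (Int.cast : ℤ → ℚ)))) :
    B.det ≠ 0 ∧ ∀ i j, 0 ≤ (B.map (Int.cast : ℤ → ℝ))⁻¹ i j := by
  classical
  obtain ⟨z, hz⟩ := hne
  simp only [monomialPolyhedron, Set.mem_setOf_eq] at hz
  -- split each row sum according to vanishing coordinates
  set c : Fin n → ℝ := fun j => ∑ k ∈ Finset.univ.filter (fun k => ¬ z k = 0),
    (B j k : ℝ) * Real.log (‖z k‖) with hc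
  set d : Fin n → ℝ := fun j => ∑ k ∈ Finset.univ.filter (fun k => z k = 0), (B j k : ℝ)
    with hd
  have hBnn : ∀ j k, z k = 0 → 0 ≤ (B j k : ℝ) := by
    intro j k hk
    have h1 : ¬ ((B.map (Int.cast : ℤ → ℚ)) j k < 0) := fun h => (hz j).1 k h hk
    rw [Matrix.map_apply] at h1
    have : (0 : ℚ) ≤ (B j k : ℚ) := not_lt.1 h1
    exact_mod_cast this
  have hd0 : ∀ j, 0 ≤ d j := by
    intro j
    refine Finset.sum_nonneg fun k hk => ?_
    exact hBnn j k (Finset.mem_filter.1 hk).2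
  have hcneg : ∀ j, d j = 0 → c j < 0 := by
    intro j hdj
    have hall : ∀ k ∈ Finset.univ.filter (fun k => z k = 0), (B j k : ℝ) = 0 :=
      (Finset.sum_eq_zero_iff_of_nonneg
        (fun k hk => hBnn j k (Finset.mem_filter.1 hk).2)).1 hdj
    have hprod : ∏ k, ‖z k‖ ^ (((B.map (Int.cast : ℤ → ℚ)) j k : ℝ))
        = Real.exp (c j) := by
      rw [← Finset.prod_filter_mul_prod_filter_not Finset.univ (fun k => z k = 0)]
      have h1 : ∏ k ∈ Finset.univ.filter (fun k => z k = 0),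
          ‖z k‖ ^ (((B.map (Int.cast : ℤ → ℚ)) j k : ℝ)) = 1 := by
        refine Finset.prod_eq_one fun k hk => ?_
        have : (((B.map (Int.cast : ℤ → ℚ)) j k : ℝ)) = 0 := by
          rw [Matrix.map_apply, Rat.cast_intCast]; exact hall k hk
        rw [this, Real.rpow_zero]
      have h2 : ∏ k ∈ Finset.univ.filter (fun k => ¬ z k = 0),
          ‖z k‖ ^ (((B.map (Int.cast : ℤ → ℚ)) j k : ℝ)) = Real.exp (c j) := by
        rw [hc, Real.exp_sum]
        refine Finset.prod_congr rfl fun k hk => ?_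
        have hk' : z k ≠ 0 := (Finset.mem_filter.1 hk).2
        have hpos : 0 < ‖z k‖ := by
          exact norm_pos_iff.2 hk'
        rw [Matrix.map_apply, Rat.cast_intCast, Real.rpow_def_of_pos hpos, mul_comm]
      rw [h1, h2, one_mul]
    have := (hz j).2
    rw [hprod] at this
    exact Real.exp_lt_one_iff.1 this
  have hev : ∀ j, ∀ᶠ t in Filter.atBot, d j * t + c j < 0 := by
    intro j
    rcases eq_or_lt_of_le (hd0 j) with h0 | hpos
    · filter_upwards with t
      rw [← h0, zero_mul, zero_add]
      exact hcneg j h0.symm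
    · have htend : Filter.Tendsto (fun t : ℝ => d j * t + c j) Filter.atBot Filter.atBot := by
        apply Filter.tendsto_atBot_add_const_right
        exact (Filter.tendsto_id (α := ℝ)).const_mul_atBot hpos
      exact htend.eventually_lt_atBot 0
  obtain ⟨t, ht⟩ := (Filter.eventually_all.2 hev).exists
  set x0 : Fin n → ℝ := fun k => if z k = 0 then t else Real.log (‖z k‖) with hx0def
  have hx0 : ∀ j, ∑ k, (B j k : ℝ) * x0 k < 0 := by
    intro j
    have hsum : ∑ k, (B j k : ℝ) * x0 k = d j * t + c j := by
      rw [← Finset.sum_filter_add_sum_filter_not Finset.univ (fun k => z k = 0)]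
      congr 1
      · rw [hd, Finset.sum_mul]
        refine Finset.sum_congr rfl fun k hk => ?_
        rw [hx0def]
        simp [(Finset.mem_filter.1 hk).2]
      · rw [hc]
        refine Finset.sum_congr rfl fun k hk => ?_
        rw [hx0def]
        simp [(Finset.mem_filter.1 hk).2]
    rw [hsum]
    exact ht j
  -- the uniform upper bound on coordinates
  obtain ⟨r, hr⟩ := hbnd.subset_closedBall 0
  have hbound : ∀ x : Fin n → ℝ, (∀ j, ∑ k, (B j k : ℝ) * x k < 0) → ∀ k, x k ≤ Real.log r := by
    intro x hx k
    have hzU := hr (mem_poly_of_strict B x hx)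
    have hnorm := mem_closedBall_zero_iff.1 hzU
    have h1 : Real.exp (x k) ≤ r := by
      calc Real.exp (x k) = ‖((Real.exp (x k) : ℝ) : ℂ)‖ := by
            rw [Complex.norm_real, Real.norm_eq_abs, abs_of_pos (Real.exp_pos _)]
        _ ≤ ‖fun k => ((Real.exp (x k) : ℝ) : ℂ)‖ :=
            norm_le_pi_norm (fun k => ((Real.exp (x k) : ℝ) : ℂ)) k
        _ ≤ r := hnorm
    have hrpos : 0 < r := (Real.exp_pos _).trans_le h1
    exact (Real.le_log_iff_exp_le hrpos).2 h1
  -- the weak cone is contained in the nonpositive orthant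
  have hD : ∀ v : Fin n → ℝ, (∀ j, ∑ k, (B j k : ℝ) * v k ≤ 0) → ∀ k, v k ≤ 0 := by
    intro v hv k
    by_contra hvk
    push_neg at hvk
    have hx0k : x0 k ≤ Real.log r := hbound x0 hx0 k
    set s := (Real.log r - x0 k + 1) / v k with hs
    have hs0 : 0 < s := div_pos (by linarith) hvk
    have hstrict : ∀ j, ∑ kk, (B j kk : ℝ) * (s * v kk + x0 kk) < 0 := by
      intro j
      have hsum : ∑ kk, (B j kk : ℝ) * (s * v kk + x0 kk)
          = s * (∑ kk, (B j kk : ℝ) * v kk) + ∑ kk, (B j kk : ℝ) * x0 kk := by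
        rw [Finset.mul_sum, ← Finset.sum_add_distrib]
        exact Finset.sum_congr rfl fun kk _ => by ring
      rw [hsum]
      have h1 : s * (∑ kk, (B j kk : ℝ) * v kk) ≤ 0 :=
        mul_nonpos_of_nonneg_of_nonpos hs0.le (hv j)
      linarith [hx0 j]
    have h2 : s * v k + x0 k ≤ Real.log r := hbound (fun kk => s * v kk + x0 kk) hstrict k
    have htv : s * v k = Real.log r - x0 k + 1 := div_mul_cancel₀ _ hvk.ne'
    linarith
  set A := B.map (Int.cast : ℤ → ℝ) with hA
  have hdetA : A.det = (B.det : ℝ) := by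
    have h := RingHom.map_det (Int.castRingHom ℝ) B
    simp only [RingHom.mapMatrix_apply, Int.coe_castRingHom] at h
    rw [hA, ← h]
  have hdet : B.det ≠ 0 := by
    intro h
    have hdetA0 : A.det = 0 := by rw [hdetA, h, Int.cast_zero]
    obtain ⟨v, hv0, hv⟩ := Matrix.exists_mulVec_eq_zero_iff.2 hdetA0
    have hmv : ∀ j, ∑ k, (B j k : ℝ) * v k = 0 := by
      intro j
      have := congrFun hv j
      simpa [Matrix.mulVec, dotProduct, hA, Matrix.map_apply] using this
    have h1 : ∀ k, v k ≤ 0 := hD v fun j => (hmv j).le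
    have h2 : ∀ k, -v k ≤ 0 := by
      refine hD (fun k => -v k) fun j => ?_
      have : ∑ k, (B j k : ℝ) * -v k = -∑ k, (B j k : ℝ) * v k := by
        rw [← Finset.sum_neg_distrib]
        exact Finset.sum_congr rfl fun k _ => by ring
      rw [this, hmv j, neg_zero]
    refine hv0 (funext fun k => ?_)
    simp only [Pi.zero_apply]
    linarith [h1 k, h2 k]
  refine ⟨hdet, fun i j => ?_⟩
  have hAdet : IsUnit A.det := by
    rw [hdetA]
    exact isUnit_iff_ne_zero.2 (by exact_mod_cast hdet)
  set x := A⁻¹ *ᵥ (-(Pi.single j (1 : ℝ))) with hxdef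
  have hAx : A *ᵥ x = -(Pi.single j (1 : ℝ)) := by
    rw [hxdef, Matrix.mulVec_mulVec, Matrix.mul_nonsing_inv _ hAdet, Matrix.one_mulVec]
  have hle : ∀ jj, ∑ k, (B jj k : ℝ) * x k ≤ 0 := by
    intro jj
    have h1 : ∑ k, (B jj k : ℝ) * x k = -((Pi.single j (1 : ℝ) : Fin n → ℝ) jj) := by
      have := congrFun hAx jj
      simpa [Matrix.mulVec, dotProduct, hA, Matrix.map_apply] using this
    rw [h1, Pi.single_apply]
    split_ifs <;> norm_num
  have h3 := hD x hle i
  have hx : x i = -(A⁻¹ i j) := by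
    rw [hxdef, Matrix.mulVec_neg, Matrix.mulVec_single]
    simp
  rw [hx] at h3
  linarith

/-- Transferring nonnegativity of the real inverse to the rational inverse and adjugate,
given a positive determinant. -/
lemma final (B : Matrix (Fin n) (Fin n) ℤ) (hdet : 0 < B.det)
    (hinv : ∀ i j, 0 ≤ (B.map (Int.cast : ℤ → ℝ))⁻¹ i j) :
    (∀ i j, 0 ≤ (B.map (Int.cast : ℤ → ℚ))⁻¹ i j) ∧ ∀ i j, 0 ≤ B.adjugate i j := by
  set A := B.map (Int.cast : ℤ → ℝ) with hA
  have hdetA : A.det = (B.det : ℝ) := by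
    have h := RingHom.map_det (Int.castRingHom ℝ) B
    simp only [RingHom.mapMatrix_apply, Int.coe_castRingHom] at h
    rw [hA, ← h]
  have hdetApos : 0 < A.det := by rw [hdetA]; exact_mod_cast hdet
  have hadjA : A.adjugate = B.adjugate.map (Int.cast : ℤ → ℝ) := by
    have h := RingHom.map_adjugate (Int.castRingHom ℝ) B
    simp only [RingHom.mapMatrix_apply, Int.coe_castRingHom] at h
    rw [hA, ← h]
  have hadj : ∀ i j, 0 ≤ B.adjugate i j := by
    intro i j
    have h1 : A.adjugate i j = A.det * A⁻¹ i j := by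
      rw [Matrix.inv_def, Matrix.smul_apply, Ring.inverse_eq_inv, smul_eq_mul, ← mul_assoc,
        mul_inv_cancel₀ hdetApos.ne', one_mul]
    have h2 : (0 : ℝ) ≤ A.adjugate i j := by
      rw [h1]; exact mul_nonneg hdetApos.le (hinv i j)
    rw [hadjA, Matrix.map_apply] at h2
    exact_mod_cast h2
  refine ⟨fun i j => ?_, hadj⟩
  have hdetQ : (B.map (Int.cast : ℤ → ℚ)).det = (B.det : ℚ) := by
    have h := RingHom.map_det (Int.castRingHom ℚ) B
    simp only [RingHom.mapMatrix_apply, Int.coe_castRingHom] at h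
    rw [← h]
  have hadjQ : (B.map (Int.cast : ℤ → ℚ)).adjugate = B.adjugate.map (Int.cast : ℤ → ℚ) := by
    have h := RingHom.map_adjugate (Int.castRingHom ℚ) B
    simp only [RingHom.mapMatrix_apply, Int.coe_castRingHom] at h
    rw [← h]
  rw [Matrix.inv_def, Matrix.smul_apply, Ring.inverse_eq_inv, smul_eq_mul, hdetQ, hadjQ,
    Matrix.map_apply]
  have h4 : (0 : ℚ) ≤ (B.det : ℚ)⁻¹ := by
    apply inv_nonneg.2
    exact_mod_cast hdet.le
  exact mul_nonneg h4 (by exact_mod_cast hadj i j)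

end MonomialPolyhedronAux

/-- If `𝒰` is a nonempty bounded monomial polyhedron defined by an integer
matrix `B`, then `det B ≠ 0`, and after possibly switching two rows (which does not change `𝒰`)
one has `det B > 0` and `B⁻¹ ⪰ 0` entrywise, equivalently `adj B ⪰ 0` entrywise. -/
theorem monomialPolyhedron_matrix_monotone {n : ℕ} (hn : 2 ≤ n)
    (B : Matrix (Fin n) (Fin n) ℤ)
    (U : Set (Fin n → ℂ)) (hU : U = monomialPolyhedron (B.map (Int.cast : ℤ → ℚ)))
    (hne : U.Nonempty) (hbnd : Bornology.IsBounded U) :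
    B.det ≠ 0 ∧
    ∃ B' : Matrix (Fin n) (Fin n) ℤ,
      (∃ i j : Fin n, B' = B.submatrix (Equiv.swap i j) id) ∧
      monomialPolyhedron (B'.map (Int.cast : ℤ → ℚ)) = U ∧
      0 < B'.det ∧
      (∀ i j, 0 ≤ (B'.map (Int.cast : ℤ → ℚ))⁻¹ i j) ∧
      (∀ i j, 0 ≤ B'.adjugate i j) := by
  subst hU
  obtain ⟨hdet, hinvR⟩ := MonomialPolyhedronAux.key B hne hbnd
  refine ⟨hdet, ?_⟩
  rcases hdet.lt_or_gt with hneg | hpos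
  · -- negative determinant: swap two rows
    have h2 : (1 : ℕ) < n := hn
    set i0 : Fin n := ⟨0, by omega⟩ with hi0
    set i1 : Fin n := ⟨1, by omega⟩ with hi1
    have h01 : i0 ≠ i1 := by
      intro h
      have := congrArg Fin.val h
      simp [hi0, hi1] at this
    set σ := Equiv.swap i0 i1 with hσ
    set B' := B.submatrix σ id with hB'
    have hperm : monomialPolyhedron (B'.map (Int.cast : ℤ → ℚ))
        = monomialPolyhedron (B.map (Int.cast : ℤ → ℚ)) := by
      ext z
      simp only [monomialPolyhedron, Set.mem_setOf_eq, hB', Matrix.map_apply,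
        Matrix.submatrix_apply, id_eq]
      constructor
      · intro h j
        have := h (σ.symm j)
        simpa using this
      · intro h j
        exact h (σ j)
    have hdet' : B'.det = -B.det := by
      rw [hB', Matrix.det_permute, hσ, Equiv.Perm.sign_swap h01]
      simp
    have hdetpos : 0 < B'.det := by rw [hdet']; omega
    have hne' : (monomialPolyhedron (B'.map (Int.cast : ℤ → ℚ))).Nonempty := by
      rw [hperm]; exact hne
    have hbnd' : Bornology.IsBounded (monomialPolyhedron (B'.map (Int.cast : ℤ → ℚ))) := by
      rw [hperm]; exact hbnd
    obtain ⟨_, hinvR'⟩ := MonomialPolyhedronAux.key B' hne' hbnd'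
    obtain ⟨hq, hadj⟩ := MonomialPolyhedronAux.final B' hdetpos hinvR'
    exact ⟨B', ⟨i0, i1, rfl⟩, hperm, hdetpos, hq, hadj⟩
  · -- positive determinant: trivial swap
    obtain ⟨hq, hadj⟩ := MonomialPolyhedronAux.final B hpos hinvR
    refine ⟨B, ⟨⟨0, by omega⟩, ⟨0, by omega⟩, ?_⟩, rfl, hpos, hq, hadj⟩
    rw [Equiv.swap_self]
    ext i j
    simp
end
end

section
/- Let n ≥ 2 and suppose B, C ∈ M_n(ℚ) are invertible matrices that both represent the same bounded monomial polyhedron 𝒰 (i.e., 𝒰 = {z : ∏_k |z_k|^{b^j_k} defined and < 1 for all j} = {z : ∏_k |z_k|^{c^j_k} defined and < 1 for all j}). Then max_{1≤k≤n} h(B^{-1}e_k) = max_{1≤k≤n} h(C^{-1}e_k); in other words, the complexity κ(𝒰) depends only on the domain 𝒰 and not on the representing matrix. -/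
open MeasureTheory Complex
open scoped ENNReal NNReal

noncomputable section

/-- The projective height of a rational vector `x`: writing `y ∈ ℤⁿ` for the integer vector
proportional to `x` with `gcd = 1`, this is `∑ |y j|`. (Here `x` is first scaled by the product
of the denominators to an integer vector, which is then divided by its gcd.) -/
def projHeight {n : ℕ} (x : Fin n → ℚ) : ℕ :=
  (∑ k, (x k * ∏ j, ((x j).den : ℚ)).num.natAbs) /
    Finset.univ.gcd fun k => (x k * ∏ j, ((x j).den : ℚ)).num.natAbs

/-- The complexity of a monomial polyhedron represented by an invertible matrix `B`:
the maximum projective height of the columns of `B⁻¹`. -/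
def matrixComplexity {n : ℕ} (B : Matrix (Fin n) (Fin n) ℚ) : ℕ :=
  Finset.univ.sup fun k => projHeight fun j => B⁻¹ j k

/-- If `𝒰_B ⊆ 𝒰_C`, then the rational cone `{x : Bx < 0}` is contained in `{x : Cx < 0}`. -/
lemma cone_mono {n : ℕ} {B C : Matrix (Fin n) (Fin n) ℚ}
    (h : monomialPolyhedron B ⊆ monomialPolyhedron C) (x : Fin n → ℚ)
    (hx : ∀ j, ∑ k, B j k * x k < 0) (j : Fin n) : ∑ k, C j k * x k < 0 := by
  set z : Fin n → ℂ := fun k => Complex.exp ((x k : ℝ) : ℂ) with hzdef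
  have habs : ∀ k, ‖z k‖ = Real.exp (x k) := by
    intro k; rw [hzdef]; rw [Complex.norm_exp]; norm_num
  have key : ∀ (D : Matrix (Fin n) (Fin n) ℚ) (j : Fin n),
      ∏ k, ‖z k‖ ^ (D j k : ℝ) = Real.exp (∑ k, (D j k : ℝ) * (x k : ℝ)) := by
    intro D j
    rw [Real.exp_sum]
    refine Finset.prod_congr rfl fun k _ => ?_
    rw [habs, Real.rpow_def_of_pos (Real.exp_pos _), Real.log_exp, mul_comm]
  have hzB : z ∈ monomialPolyhedron B := by
    intro j'
    refine ⟨fun k _ => Complex.exp_ne_zero _, ?_⟩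
    rw [key]
    rw [show (1 : ℝ) = Real.exp 0 by simp]
    rw [Real.exp_lt_exp]
    have := hx j'
    have : ((∑ k, B j' k * x k : ℚ) : ℝ) < 0 := by exact_mod_cast this
    push_cast at this
    exact this
  have hzC := h hzB j
  rw [key] at hzC
  have : (∑ k, (C j k : ℝ) * (x k : ℝ)) < 0 := by
    by_contra hcon
    push_neg at hcon
    exact absurd hzC.2 (by simpa using Real.one_le_exp hcon)
  have : ((∑ k, C j k * x k : ℚ) : ℝ) < 0 := by push_cast; exact this
  exact_mod_cast this

/-- If the cone of `B` is contained in the cone of `C`, then `C * B⁻¹` has nonnegative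
entries. -/
lemma entries_nonneg {n : ℕ} {B C : Matrix (Fin n) (Fin n) ℚ} (hB : B.det ≠ 0)
    (hmono : ∀ x : Fin n → ℚ, (∀ j, ∑ k, B j k * x k < 0) → ∀ j, ∑ k, C j k * x k < 0)
    (i k : Fin n) : 0 ≤ (C * B⁻¹) i k := by
  set M := C * B⁻¹ with hM
  by_contra hneg
  push_neg at hneg
  set t : ℚ := -(M i k) with ht
  have htpos : 0 < t := by simp [ht]; linarith
  set S : ℚ := ∑ j, M i j with hS
  have key : ∀ ε : ℚ, 0 < ε → t < ε * S := by
    intro ε hε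
    set v : Fin n → ℚ := fun j => -(if j = k then 1 else 0) - ε with hv
    set x : Fin n → ℚ := Matrix.mulVec B⁻¹ v with hx
    have hBx : ∀ j, ∑ l, B j l * x l < 0 := by
      intro j
      have : Matrix.mulVec B x = v := by
        rw [hx, Matrix.mulVec_mulVec, Matrix.mul_nonsing_inv _ (isUnit_iff_ne_zero.mpr hB),
          Matrix.one_mulVec]
      have h2 : (Matrix.mulVec B x) j = v j := by rw [this]
      rw [Matrix.mulVec, dotProduct] at h2
      rw [h2, hv]
      by_cases hjk : j = k <;> simp [hjk] <;> linarith
    have := hmono x hBx i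
    have hCx : ∑ l, C i l * x l = (Matrix.mulVec M v) i := by
      rw [hM, ← Matrix.mulVec_mulVec, hx]
      rw [Matrix.mulVec, dotProduct]
    rw [hCx] at this
    have hexp : (Matrix.mulVec M v) i = -(M i k) - ε * S := by
      rw [Matrix.mulVec, dotProduct, hv, hS]
      have : ∀ j, M i j * (-(if j = k then 1 else 0) - ε)
          = -(M i j * (if j = k then 1 else 0)) - ε * M i j := by intro j; ring
      rw [Finset.sum_congr rfl fun j _ => this j]
      rw [Finset.sum_sub_distrib, Finset.sum_neg_distrib, ← Finset.mul_sum]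
      congr 1
      · congr 1
        simp [Finset.sum_ite_eq']
    rw [hexp] at this
    rw [ht]; linarith
  have h1 : t < S := by simpa using key 1 one_pos
  have hS0 : 0 < S := lt_trans htpos h1
  have h2 := key (t / (2 * S)) (by positivity)
  rw [div_mul_eq_mul_div, mul_comm] at h2
  have : t < t / 2 := by
    calc t < S * t / (2 * S) := h2
    _ = t / 2 := by field_simp
  linarith

/-- A rational matrix with nonnegative entries whose inverse also has nonnegative entries
is a monomial matrix: each column has exactly one (positive) nonzero entry, and the positions
form a permutation. -/
lemma monomial_structure {n : ℕ} {P Q : Matrix (Fin n) (Fin n) ℚ}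
    (hP : ∀ i j, 0 ≤ P i j) (hQ : ∀ i j, 0 ≤ Q i j)
    (hPQ : P * Q = 1) (hQP : Q * P = 1) :
    ∃ σ : Equiv.Perm (Fin n), ∀ k, 0 < P (σ k) k ∧ ∀ j, j ≠ σ k → P j k = 0 := by
  have hcol : ∀ k, ∃ l, 0 < P l k := by
    intro k
    by_contra hc
    push_neg at hc
    have hz : ∀ l, P l k = 0 := fun l => le_antisymm (hc l) (hP l k)
    have : (Q * P) k k = 0 := by
      rw [Matrix.mul_apply]
      exact Finset.sum_eq_zero fun j _ => by rw [hz j, mul_zero]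
    rw [hQP] at this
    simp at this
  have claimA : ∀ k l, 0 < P l k → ∀ i, i ≠ k → Q i l = 0 := by
    intro k l hl i hik
    have h0 : (Q * P) i k = 0 := by rw [hQP]; simp [Matrix.one_apply, hik]
    rw [Matrix.mul_apply] at h0
    have := (Finset.sum_eq_zero_iff_of_nonneg
      (fun j _ => mul_nonneg (hQ i j) (hP j k))).mp h0 l (Finset.mem_univ l)
    rcases mul_eq_zero.mp this with h | h
    · exact h
    · exact absurd h (ne_of_gt hl)
  have claimB : ∀ k l, 0 < P l k → 0 < Q k l := by
    intro k l hl
    rcases lt_or_eq_of_le (hQ k l) with h | h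
    · exact h
    have hzcol : ∀ i, Q i l = 0 := by
      intro i
      by_cases hik : i = k
      · rw [hik, ← h]
      · exact claimA k l hl i hik
    have : (P * Q) l l = 0 := by
      rw [Matrix.mul_apply]
      exact Finset.sum_eq_zero fun j _ => by rw [hzcol j, mul_zero]
    rw [hPQ] at this; simp at this
  have huniq : ∀ k l l', 0 < P l k → 0 < P l' k → l = l' := by
    intro k l l' hl hl'
    by_contra hne
    have h0 : (P * Q) l l' = 0 := by rw [hPQ]; simp [Matrix.one_apply, hne]
    rw [Matrix.mul_apply] at h0
    have := (Finset.sum_eq_zero_iff_of_nonneg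
      (fun j _ => mul_nonneg (hP l j) (hQ j l'))).mp h0 k (Finset.mem_univ k)
    rcases mul_eq_zero.mp this with h | h
    · exact absurd h (ne_of_gt hl)
    · exact absurd h (ne_of_gt (claimB k l' hl'))
  choose f hf using hcol
  have hinj : Function.Injective f := by
    intro k k' hkk
    by_contra hne
    have h1 : Q k (f k) > 0 := claimB k (f k) (hf k)
    have h2 : Q k (f k') = 0 := claimA k' (f k') (hf k') k hne
    rw [hkk] at h1
    rw [h2] at h1
    exact lt_irrefl 0 h1
  refine ⟨Equiv.ofBijective f (Finite.injective_iff_bijective.mp hinj), fun k => ?_⟩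
  refine ⟨hf k, fun j hj => ?_⟩
  rcases lt_or_eq_of_le (hP j k) with h | h
  · exact absurd (huniq k j (f k) h (hf k)) hj
  · exact h.symm

/-- Rescaling an integer vector rationally does not change `(∑|y|)/gcd(y)`. -/
lemma ratio_eq {n : ℕ} {y y' : Fin n → ℤ} {a b : ℤ} (ha : a ≠ 0) (hb : b ≠ 0)
    (h : ∀ k, b * y' k = a * y k) :
    (∑ k, (y' k).natAbs) / Finset.univ.gcd (fun k => (y' k).natAbs)
      = (∑ k, (y k).natAbs) / Finset.univ.gcd (fun k => (y k).natAbs) := by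
  set A := a.natAbs with hA
  set Bn := b.natAbs with hB
  have hA0 : A ≠ 0 := Int.natAbs_ne_zero.mpr ha
  have hB0 : Bn ≠ 0 := Int.natAbs_ne_zero.mpr hb
  have habs : ∀ k, Bn * (y' k).natAbs = A * (y k).natAbs := by
    intro k
    have := congrArg Int.natAbs (h k)
    rwa [Int.natAbs_mul, Int.natAbs_mul] at this
  set S := ∑ k, (y k).natAbs with hS
  set S' := ∑ k, (y' k).natAbs with hS'
  set g := Finset.univ.gcd (fun k => (y k).natAbs) with hg
  set g' := Finset.univ.gcd (fun k => (y' k).natAbs) with hg'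
  have hsum : Bn * S' = A * S := by
    rw [hS, hS', Finset.mul_sum, Finset.mul_sum]
    exact Finset.sum_congr rfl fun k _ => habs k
  have hgcd : Bn * g' = A * g := by
    have h1 : Finset.univ.gcd (fun k => Bn * (y' k).natAbs) = Bn * g' := by
      rw [Finset.gcd_mul_left]; simp [hg']
    have h2 : Finset.univ.gcd (fun k => A * (y k).natAbs) = A * g := by
      rw [Finset.gcd_mul_left]; simp [hg]
    rw [← h1, ← h2]
    exact Finset.gcd_congr rfl fun k _ => habs k
  have hdvd : g ∣ S := Finset.dvd_sum fun k _ => Finset.gcd_dvd (Finset.mem_univ k)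
  have hdvd' : g' ∣ S' := Finset.dvd_sum fun k _ => Finset.gcd_dvd (Finset.mem_univ k)
  by_cases hg0 : g = 0
  · have hgz : ∀ k, (y k).natAbs = 0 := by
      intro k
      have := Finset.gcd_dvd (f := fun k => (y k).natAbs) (Finset.mem_univ k)
      rw [← hg, hg0] at this
      exact Nat.eq_zero_of_zero_dvd this
    have hgz' : ∀ k, (y' k).natAbs = 0 := by
      intro k
      have := habs k
      rw [hgz k, mul_zero] at this
      exact (Nat.mul_eq_zero.mp this).resolve_left hB0
    have : S' = 0 := Finset.sum_eq_zero fun k _ => hgz' k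
    have hSz : S = 0 := Finset.sum_eq_zero fun k _ => hgz k
    rw [this, hSz, Nat.zero_div, Nat.zero_div]
  · have hg'0 : g' ≠ 0 := by
      intro h0
      rw [h0, mul_zero] at hgcd
      exact hg0 (Nat.mul_eq_zero.mp hgcd.symm |>.resolve_left hA0)
    obtain ⟨m, hm⟩ := hdvd
    obtain ⟨m', hm'⟩ := hdvd'
    have hcross : S' * g = S * g' := by
      have : Bn * (S' * g) = Bn * (S * g') := by
        calc Bn * (S' * g) = (Bn * S') * g := by ring
        _ = (A * S) * g := by rw [hsum]
        _ = S * (A * g) := by ring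
        _ = S * (Bn * g') := by rw [hgcd]
        _ = Bn * (S * g') := by ring
      exact Nat.eq_of_mul_eq_mul_left (Nat.pos_of_ne_zero hB0) this
    have hmm : m' = m := by
      rw [hm, hm'] at hcross
      have : g' * (m' * g) = g' * (m * g) := by ring_nf; ring_nf at hcross; linarith [hcross]
      have := Nat.eq_of_mul_eq_mul_left (Nat.pos_of_ne_zero hg'0) this
      exact Nat.eq_of_mul_eq_mul_right (Nat.pos_of_ne_zero hg0) this
    rw [hm, hm', hmm, Nat.mul_div_cancel_left _ (Nat.pos_of_ne_zero hg0),
      Nat.mul_div_cancel_left _ (Nat.pos_of_ne_zero hg'0)]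

lemma num_cast_eq {n : ℕ} (x : Fin n → ℚ) (k : Fin n) :
    (((x k * ∏ j, ((x j).den : ℚ)).num : ℚ)) = x k * ∏ j, ((x j).den : ℚ) := by
  have hsplit : (∏ j, ((x j).den : ℚ)) = ((x k).den : ℚ) *
      ∏ j ∈ Finset.univ.erase k, ((x j).den : ℚ) :=
    (Finset.mul_prod_erase Finset.univ _ (Finset.mem_univ k)).symm
  have hint : x k * ∏ j, ((x j).den : ℚ) =
      (((x k).num * ∏ j ∈ Finset.univ.erase k, ((x j).den : ℤ) : ℤ) : ℚ) := by
    rw [hsplit, ← mul_assoc, Rat.mul_den_eq_num]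
    push_cast
    ring
  rw [hint, Rat.num_intCast]

/-- The projective height is invariant under nonzero rational scaling. -/
lemma projHeight_smul {n : ℕ} {c : ℚ} (hc : c ≠ 0) (x : Fin n → ℚ) :
    projHeight (fun j => c * x j) = projHeight x := by
  set x' : Fin n → ℚ := fun j => c * x j with hx'
  set D : ℚ := ∏ j, ((x j).den : ℚ) with hD
  set D' : ℚ := ∏ j, ((x' j).den : ℚ) with hD'
  have hDpos : 0 < D := Finset.prod_pos fun j _ => by positivity
  have hD'pos : 0 < D' := Finset.prod_pos fun j _ => by positivity
  set y : Fin n → ℤ := fun k => (x k * D).num with hy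
  set y' : Fin n → ℤ := fun k => (x' k * D').num with hy'
  have hyc : ∀ k, ((y k : ℚ)) = x k * D := fun k => num_cast_eq x k
  have hy'c : ∀ k, ((y' k : ℚ)) = x' k * D' := fun k => num_cast_eq x' k
  set r : ℚ := c * D' / D with hr
  have hrne : r ≠ 0 := by
    rw [hr]
    exact div_ne_zero (mul_ne_zero hc (ne_of_gt hD'pos)) (ne_of_gt hDpos)
  have hrel : ∀ k, ((r.den : ℤ)) * y' k = r.num * y k := by
    intro k
    have : ((r.den : ℚ)) * (y' k : ℚ) = (r.num : ℚ) * (y k : ℚ) := by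
      rw [hyc, hy'c, hx']
      have h1 : (r.num : ℚ) = r * r.den := (Rat.mul_den_eq_num r).symm
      rw [h1, hr]
      field_simp
    exact_mod_cast this
  have hb : ((r.den : ℤ)) ≠ 0 := by exact_mod_cast r.den_nz
  have ha : r.num ≠ 0 := Rat.num_ne_zero.mpr hrne
  exact ratio_eq ha hb hrel

/-- If two invertible rational matrices `B`, `C` represent the same bounded
monomial polyhedron `𝒰`, then the maximum projective height of the columns of `B⁻¹` equals
that of the columns of `C⁻¹`: the complexity `κ(𝒰)` depends only on `𝒰`. -/
theorem complexity_well_defined {n : ℕ} (hn : 2 ≤ n)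
    (B C : Matrix (Fin n) (Fin n) ℚ) (hB : B.det ≠ 0) (hC : C.det ≠ 0)
    (hBC : monomialPolyhedron B = monomialPolyhedron C)
    (hne : (monomialPolyhedron B).Nonempty)
    (hbnd : Bornology.IsBounded (monomialPolyhedron B)) :
    matrixComplexity B = matrixComplexity C := by
  have hBu : IsUnit B.det := isUnit_iff_ne_zero.mpr hB
  have hCu : IsUnit C.det := isUnit_iff_ne_zero.mpr hC
  set M := C * B⁻¹ with hM
  set N := B * C⁻¹ with hN
  have hMpos : ∀ i k, 0 ≤ M i k :=
    entries_nonneg hB (fun x hx j => cone_mono (le_of_eq hBC) x hx j)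
  have hNpos : ∀ i k, 0 ≤ N i k :=
    entries_nonneg hC (fun x hx j => cone_mono (le_of_eq hBC.symm) x hx j)
  have hMN : M * N = 1 := by
    rw [hM, hN, Matrix.mul_assoc, ← Matrix.mul_assoc B⁻¹,
      Matrix.nonsing_inv_mul _ hBu, Matrix.one_mul, Matrix.mul_nonsing_inv _ hCu]
  have hNM : N * M = 1 := by
    rw [hN, hM, Matrix.mul_assoc, ← Matrix.mul_assoc C⁻¹,
      Matrix.nonsing_inv_mul _ hCu, Matrix.one_mul, Matrix.mul_nonsing_inv _ hBu]
  obtain ⟨σ, hσ⟩ := monomial_structure hMpos hNpos hMN hNM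
  -- B⁻¹ = C⁻¹ * M
  have hBinv : B⁻¹ = C⁻¹ * M := by
    rw [hM, ← Matrix.mul_assoc, Matrix.nonsing_inv_mul _ hCu, Matrix.one_mul]
  have hcolumn : ∀ k j, B⁻¹ j k = M (σ k) k * C⁻¹ j (σ k) := by
    intro k j
    rw [hBinv, Matrix.mul_apply]
    rw [Finset.sum_eq_single (σ k)]
    · ring
    · intro l _ hl
      rw [(hσ k).2 l hl, mul_zero]
    · intro habs; exact absurd (Finset.mem_univ _) habs
  have hheight : ∀ k, (projHeight fun j => B⁻¹ j k) = projHeight fun j => C⁻¹ j (σ k) := by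
    intro k
    have h1 : (fun j => B⁻¹ j k) = fun j => M (σ k) k * C⁻¹ j (σ k) :=
      funext fun j => hcolumn k j
    rw [h1]
    exact projHeight_smul (ne_of_gt (hσ k).1) _
  unfold matrixComplexity
  rw [Finset.sup_congr rfl fun k _ => hheight k]
  have : (Finset.univ.sup fun k => projHeight fun j => C⁻¹ j (σ k))
      = Finset.univ.sup ((fun k => projHeight fun j => C⁻¹ j k) ∘ σ) := rfl
  rw [this, ← Equiv.coe_toEmbedding, ← Finset.sup_map, Finset.map_univ_equiv]
end
end

section
/- Let 1 ≤ p < ∞, let n ≥ 1, and let γ ∈ ℝ^n satisfy γ_j > −2 for every j. Then there is a constant C > 0 such that for every holomorphic function f on the unit polydisc 𝔻^n with ∫_{𝔻^n} |f|^p dV < ∞, one has ∫_{𝔻^n} |f(z)|^p ∏_{j=1}^n |z_j|^{γ_j} dV(z) ≤ C ∫_{𝔻^n} |f|^p dV. -/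
open MeasureTheory Complex Metric Set Function
open scoped ENNReal NNReal Real

noncomputable section

/-- The unit polydisc `𝔻ⁿ ⊆ ℂⁿ`. -/
def polydisc (n : ℕ) : Set (Fin n → ℂ) := {z | ∀ j, ‖z j‖ < 1}

section Helpers

lemma ofReal_norm_eq_coe_nnnorm {E : Type*} [SeminormedAddCommGroup E] (a : E) :
    ENNReal.ofReal ‖a‖ = (‖a‖₊ : ℝ≥0∞) := by
  rw [← coe_nnnorm, ENNReal.ofReal_coe_nnreal]

lemma measurable_indicator_of_continuousOn {α β : Type*} [MeasurableSpace α] [TopologicalSpace α]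
    [OpensMeasurableSpace α] [MeasurableSpace β] [TopologicalSpace β] [BorelSpace β] [Zero β]
    {s : Set α} (hs : IsOpen s) {f : α → β} (hf : ContinuousOn f s) :
    Measurable (s.indicator f) := by
  apply measurable_of_restrict_of_restrict_compl hs.measurableSet
  · have h1 : s.domRestrict (s.indicator f) = s.domRestrict f :=
      funext fun x => indicator_of_mem x.2 f
    rw [h1]
    exact (ContinuousOn.restrict hf).measurable
  · have h2 : sᶜ.domRestrict (s.indicator f) = fun _ => 0 :=
      funext fun x => indicator_of_notMem x.2 f
    rw [h2]
    exact measurable_const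

lemma circ_mean {g : ℂ → ℂ} {y : ℂ} {ρ : ℝ} (hρ : 0 < ρ)
    (hsub : closedBall y ρ ⊆ ball (0:ℂ) 1) (hg : DifferentiableOn ℂ g (ball (0:ℂ) 1)) :
    2 * π * ‖g y‖ ≤ ∫ θ in (-π)..π, ‖g (circleMap y ρ θ)‖ := by
  have hc : ContinuousOn g (closedBall y ρ) := hg.continuousOn.mono hsub
  have hd : ∀ z ∈ ball y ρ \ (∅ : Set ℂ), DifferentiableAt ℂ g z := fun z hz =>
    hg.differentiableAt (isOpen_ball.mem_nhds (hsub (ball_subset_closedBall hz.1)))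
  have key := circleIntegral_sub_center_inv_smul_of_differentiable_on_off_countable hρ
      countable_empty hc hd
  have e1 : (∮ z in C(y, ρ), (z - y)⁻¹ • g z)
      = I • ∫ θ in (0:ℝ)..(2*π), g (circleMap y ρ θ) := by
    rw [circleIntegral, ← intervalIntegral.integral_smul]
    refine intervalIntegral.integral_congr fun θ _ => ?_
    have hne : circleMap 0 ρ θ ≠ 0 := by
      intro h
      have := norm_circleMap_zero ρ θ
      rw [h] at this
      simp [abs_of_pos hρ] at this
      exact hρ.ne' this.symm
    rw [deriv_circleMap, circleMap_sub_center, smul_eq_mul, smul_eq_mul, smul_eq_mul]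
    field_simp
  have e2 : ‖I • ∫ θ in (0:ℝ)..(2*π), g (circleMap y ρ θ)‖
      = ‖∫ θ in (0:ℝ)..(2*π), g (circleMap y ρ θ)‖ := by
    rw [norm_smul, Complex.norm_I, one_mul]
  have e3 : ‖(2 * ↑π * I : ℂ) • g y‖ = 2 * π * ‖g y‖ := by
    rw [norm_smul]
    simp [abs_of_pos Real.pi_pos]
  have e4 : (∫ θ in (0:ℝ)..(2*π), g (circleMap y ρ θ))
      = ∫ θ in (-π)..π, g (circleMap y ρ θ) := by
    have hper : Function.Periodic (fun θ => g (circleMap y ρ θ)) (2*π) :=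
      fun θ => by simp [(periodic_circleMap y ρ) θ]
    have h2 := hper.intervalIntegral_add_eq 0 (-π)
    rw [zero_add, show -π + 2*π = π by ring] at h2
    exact h2
  calc 2 * π * ‖g y‖ = ‖(2 * ↑π * I : ℂ) • g y‖ := e3.symm
    _ = ‖∫ θ in (0:ℝ)..(2*π), g (circleMap y ρ θ)‖ := by rw [← key, e1, e2]
    _ = ‖∫ θ in (-π)..π, g (circleMap y ρ θ)‖ := by rw [e4]
    _ ≤ ∫ θ in (-π)..π, ‖g (circleMap y ρ θ)‖ :=
        intervalIntegral.norm_integral_le_integral_norm (by linarith [Real.pi_pos])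

lemma circ_mean_pow {p : ℝ} (hp : 1 ≤ p) {g : ℂ → ℂ} {y : ℂ} {ρ : ℝ} (hρ : 0 < ρ)
    (hsub : closedBall y ρ ⊆ ball (0:ℂ) 1) (hg : DifferentiableOn ℂ g (ball (0:ℂ) 1)) :
    ENNReal.ofReal (2*π) * (‖g y‖₊ : ℝ≥0∞) ^ p
      ≤ ∫⁻ θ in Ioc (-π) π, (‖g (circleMap y ρ θ)‖₊ : ℝ≥0∞) ^ p := by
  have hpos := Real.pi_pos
  have hmem : ∀ θ : ℝ, circleMap y ρ θ ∈ ball (0:ℂ) 1 := fun θ =>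
    hsub (sphere_subset_closedBall (circleMap_mem_sphere y hρ.le θ))
  have hcont : Continuous fun θ => g (circleMap y ρ θ) := by
    rw [continuous_iff_continuousAt]
    exact fun θ => ((hg.differentiableAt (isOpen_ball.mem_nhds (hmem θ))).continuousAt).comp
      (continuous_circleMap y ρ).continuousAt
  set v : ℝ → ℝ≥0∞ := fun θ => (‖g (circleMap y ρ θ)‖₊ : ℝ≥0∞) with hv
  have hvmeas : Measurable v := (continuous_nnnorm.comp hcont).measurable.coe_nnreal_ennreal
  set A := ∫⁻ θ in Ioc (-π) π, v θ with hA
  set X := ∫⁻ θ in Ioc (-π) π, v θ ^ p with hX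
  have h1 : ENNReal.ofReal (2*π) * (‖g y‖₊ : ℝ≥0∞) ≤ A := by
    have hint : IntegrableOn (fun θ => ‖g (circleMap y ρ θ)‖) (Ioc (-π) π) :=
      hcont.norm.integrableOn_Ioc
    calc ENNReal.ofReal (2*π) * (‖g y‖₊ : ℝ≥0∞)
        = ENNReal.ofReal (2 * π * ‖g y‖) := by
          rw [← ofReal_norm_eq_coe_nnnorm, ← ENNReal.ofReal_mul (by positivity)]
      _ ≤ ENNReal.ofReal (∫ θ in (-π)..π, ‖g (circleMap y ρ θ)‖) :=
          ENNReal.ofReal_le_ofReal (circ_mean hρ hsub hg)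
      _ = ENNReal.ofReal (∫ θ in Ioc (-π) π, ‖g (circleMap y ρ θ)‖) := by
          rw [intervalIntegral.integral_of_le (by linarith)]
      _ = ∫⁻ θ in Ioc (-π) π, ENNReal.ofReal ‖g (circleMap y ρ θ)‖ :=
          ofReal_integral_eq_lintegral_ofReal hint
            (Filter.Eventually.of_forall fun θ => norm_nonneg _)
      _ = A := lintegral_congr fun θ => ofReal_norm_eq_coe_nnnorm _
  have hμ : (volume : Measure ℝ) (Ioc (-π) π) = ENNReal.ofReal (2*π) := by
    rw [Real.volume_Ioc]; congr 1; ring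
  have h2 : A ^ p ≤ X * (ENNReal.ofReal (2*π)) ^ (p-1) := by
    rcases eq_or_lt_of_le hp with rfl | hp1
    · simp [hA, hX]
    · have hpq := Real.HolderConjugate.conjExponent hp1
      have hold := ENNReal.lintegral_mul_le_Lp_mul_Lq (volume.restrict (Ioc (-π) π)) hpq
        hvmeas.aemeasurable (aemeasurable_const (b := (1:ℝ≥0∞)))
      simp only [Pi.mul_apply, mul_one, ENNReal.one_rpow, lintegral_const,
        Measure.restrict_apply_univ, hμ] at hold
      have hold2 : A ≤ X ^ (1/p) * (ENNReal.ofReal (2*π)) ^ (1/p.conjExponent) := by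
        rw [one_mul] at hold; exact hold
      have hq : (1/p.conjExponent) * p = p - 1 := by
        have h0 : p ≠ 0 := by linarith
        have : 1/p.conjExponent = 1 - 1/p := by
          have := hpq.inv_add_inv_eq_one
          simp only [one_div] at this ⊢
          linarith
        rw [this]; field_simp
      calc A ^ p ≤ (X ^ (1/p) * (ENNReal.ofReal (2*π)) ^ (1/p.conjExponent)) ^ p :=
            ENNReal.rpow_le_rpow hold2 (by linarith)
        _ = X ^ ((1/p)*p) * (ENNReal.ofReal (2*π)) ^ ((1/p.conjExponent)*p) := by
            rw [ENNReal.mul_rpow_of_nonneg _ _ (by linarith), ← ENNReal.rpow_mul,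
              ← ENNReal.rpow_mul]
        _ = X * (ENNReal.ofReal (2*π)) ^ (p-1) := by
            rw [one_div, inv_mul_cancel₀ (by linarith : p ≠ 0), ENNReal.rpow_one, hq]
  have hb0 : (ENNReal.ofReal (2*π)) ≠ 0 := by
    simp only [ne_eq, ENNReal.ofReal_eq_zero, not_le]; positivity
  have hbt : (ENNReal.ofReal (2*π)) ≠ ⊤ := ENNReal.ofReal_ne_top
  have hx0 : (ENNReal.ofReal (2*π)) ^ (p-1) ≠ 0 := by
    simp [ENNReal.rpow_eq_zero_iff, hb0, hbt, hpos.not_ge, hp]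
  have hxt : (ENNReal.ofReal (2*π)) ^ (p-1) ≠ ⊤ := by
    exact ENNReal.rpow_ne_top_of_nonneg (by linarith) hbt
  rw [← ENNReal.mul_le_mul_iff_right hx0 hxt]
  calc (ENNReal.ofReal (2*π)) ^ (p-1) * (ENNReal.ofReal (2*π) * (‖g y‖₊ : ℝ≥0∞) ^ p)
      = ((ENNReal.ofReal (2*π)) ^ (p-1) * (ENNReal.ofReal (2*π)) ^ (1:ℝ)) * (‖g y‖₊ : ℝ≥0∞) ^ p := by
        rw [ENNReal.rpow_one]; ring
    _ = (ENNReal.ofReal (2*π)) ^ p * (‖g y‖₊ : ℝ≥0∞) ^ p := by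
        rw [← ENNReal.rpow_add _ _ hb0 hbt]; norm_num
    _ = (ENNReal.ofReal (2*π) * (‖g y‖₊ : ℝ≥0∞)) ^ p := by
        rw [ENNReal.mul_rpow_of_nonneg _ _ (by linarith : (0:ℝ) ≤ p)]
    _ ≤ A ^ p := ENNReal.rpow_le_rpow h1 (by linarith)
    _ ≤ X * (ENNReal.ofReal (2*π)) ^ (p-1) := h2
    _ = (ENNReal.ofReal (2*π)) ^ (p-1) * X := mul_comm _ _

/-- Polar coordinates (shifted by `y`) lower bound for a lintegral over a ball. -/
lemma polar_lower (y : ℂ) {r : ℝ} (h : ℂ → ℝ≥0∞) :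
    ∫⁻ pr in Ioo (0:ℝ) r ×ˢ Ioo (-π) π, ENNReal.ofReal pr.1 * h (circleMap y pr.1 pr.2)
      ≤ ∫⁻ z in ball y r, h z := by
  set e := Complex.measurableEquivRealProd with he
  set s : Set (ℝ × ℝ) := Ioo (0:ℝ) r ×ˢ Ioo (-π) π with hs
  set F : ℝ × ℝ → ℝ × ℝ := fun pr => (y.re, y.im) + polarCoord.symm pr with hF
  have hFcirc : ∀ pr : ℝ × ℝ, e.symm (F pr) = circleMap y pr.1 pr.2 := by
    intro pr
    apply Complex.ext <;>
      simp [hF, he, Complex.measurableEquivRealProd, circleMap,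
        Complex.exp_ofReal_mul_I_re, Complex.exp_ofReal_mul_I_im,
        Complex.equivRealProd, Complex.add_re, Complex.add_im]
  have hmemball : ∀ pr ∈ s, circleMap y pr.1 pr.2 ∈ ball y r := by
    rintro ⟨ρ, θ⟩ ⟨hρ, hθ⟩
    have : circleMap y ρ θ ∈ sphere y ρ := circleMap_mem_sphere y hρ.1.le θ
    rw [mem_sphere] at this
    rw [mem_ball, this]
    exact hρ.2
  have hB : ∀ pr : ℝ × ℝ, HasFDerivWithinAt F
      (LinearMap.toContinuousLinearMap ((Matrix.toLin (Module.Basis.finTwoProd ℝ) (Module.Basis.finTwoProd ℝ))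
        !![Real.cos pr.2, -pr.1 * Real.sin pr.2; Real.sin pr.2, pr.1 * Real.cos pr.2])) s pr :=
    fun pr => ((hasFDerivAt_polarCoord_symm pr).const_add _).hasFDerivWithinAt
  have hB' : ∀ pr ∈ s, HasFDerivWithinAt F
      (LinearMap.toContinuousLinearMap ((Matrix.toLin (Module.Basis.finTwoProd ℝ) (Module.Basis.finTwoProd ℝ))
        !![Real.cos pr.2, -pr.1 * Real.sin pr.2; Real.sin pr.2, pr.1 * Real.cos pr.2])) s pr :=
    fun pr _ => hB pr
  have hdet : ∀ pr : ℝ × ℝ, (LinearMap.toContinuousLinearMap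
      ((Matrix.toLin (Module.Basis.finTwoProd ℝ) (Module.Basis.finTwoProd ℝ))
        !![Real.cos pr.2, -pr.1 * Real.sin pr.2; Real.sin pr.2, pr.1 * Real.cos pr.2])).det
      = pr.1 := by
    intro pr
    conv_rhs => rw [← one_mul pr.1, ← Real.cos_sq_add_sin_sq pr.2]
    simp only [neg_mul, ContinuousLinearMap.det, LinearMap.coe_toContinuousLinearMap,
      LinearMap.det_toLin, Matrix.det_fin_two_of, sub_neg_eq_add]
    ring
  have hinj : InjOn F s := by
    have h1 : InjOn (⇑polarCoord.symm) polarCoord.target := by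
      have := polarCoord.symm.injOn
      rwa [OpenPartialHomeomorph.symm_source] at this
    have hsub : s ⊆ polarCoord.target := by
      rw [polarCoord_target]
      exact prod_mono (Ioo_subset_Ioi_self) le_rfl
    intro a ha b hb hab
    have h2 : polarCoord.symm a = polarCoord.symm b := by
      have h3 := hab
      simp only [hF] at h3
      exact add_left_cancel h3
    exact (h1.mono hsub) ha hb h2
  have hmeass : MeasurableSet s := measurableSet_Ioo.prod measurableSet_Ioo
  calc ∫⁻ pr in s, ENNReal.ofReal pr.1 * h (circleMap y pr.1 pr.2)
      = ∫⁻ pr in s, ENNReal.ofReal |(LinearMap.toContinuousLinearMap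
          ((Matrix.toLin (Module.Basis.finTwoProd ℝ) (Module.Basis.finTwoProd ℝ))
          !![Real.cos pr.2, -pr.1 * Real.sin pr.2; Real.sin pr.2, pr.1 * Real.cos pr.2])).det|
          * ((ball y r).indicator h (e.symm (F pr))) := by
        refine setLIntegral_congr_fun hmeass (fun pr hpr => ?_)
        rw [hdet, abs_of_pos (show (0:ℝ) < pr.1 from hpr.1.1), hFcirc,
          indicator_of_mem (hmemball pr hpr)]
    _ = ∫⁻ q in F '' s, (ball y r).indicator h (e.symm q) :=
        (lintegral_image_eq_lintegral_abs_det_fderiv_mul volume hmeass hB' hinj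
          (fun q => (ball y r).indicator h (e.symm q))).symm
    _ ≤ ∫⁻ q, (ball y r).indicator h (e.symm q) := setLIntegral_le_lintegral _ _
    _ = ∫⁻ z, (ball y r).indicator h z := by
        exact (Complex.volume_preserving_equiv_real_prod.symm).lintegral_comp_emb
          e.symm.measurableEmbedding _
    _ = ∫⁻ z in ball y r, h z := lintegral_indicator measurableSet_ball h

lemma submean {p : ℝ} (hp : 1 ≤ p) {g : ℂ → ℂ} (hg : DifferentiableOn ℂ g (ball (0:ℂ) 1))
    {y : ℂ} (hy : ‖y‖ ≤ 1/2) :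
    (‖g y‖₊ : ℝ≥0∞) ^ p ≤ ENNReal.ofReal (16/π) * ∫⁻ z in ball (0:ℂ) 1, (‖g z‖₊ : ℝ≥0∞) ^ p := by
  have hpos := Real.pi_pos
  have hcb : ∀ ρ : ℝ, ρ ≤ 1/4 → closedBall y ρ ⊆ ball (0:ℂ) 1 := by
    intro ρ hρ z hz
    rw [mem_closedBall] at hz
    rw [mem_ball]
    calc dist z 0 ≤ dist z y + dist y 0 := dist_triangle _ _ _
      _ ≤ ρ + 1/2 := by
          refine add_le_add hz ?_
          rwa [dist_zero_right]
      _ < 1 := by linarith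
  have hballsub : ball y (1/4) ⊆ ball (0:ℂ) 1 :=
    (ball_subset_closedBall).trans (hcb _ le_rfl)
  set h : ℂ → ℝ≥0∞ := fun z => (‖g z‖₊ : ℝ≥0∞) ^ p with hh
  set s : Set (ℝ × ℝ) := Ioo (0:ℝ) (1/4) ×ˢ Ioo (-π) π with hs
  set K : ℝ≥0∞ := ENNReal.ofReal (2*π) * (‖g y‖₊ : ℝ≥0∞) ^ p with hK
  have hKt : K ≠ ⊤ :=
    ENNReal.mul_ne_top ENNReal.ofReal_ne_top
      (ENNReal.rpow_ne_top_of_nonneg (by linarith) ENNReal.coe_ne_top)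
  -- continuity for Tonelli
  have hcmap : Continuous fun pr : ℝ × ℝ => circleMap y pr.1 pr.2 := by
    unfold circleMap
    exact continuous_const.add ((Complex.continuous_ofReal.comp continuous_fst).mul
      (Complex.continuous_exp.comp ((Complex.continuous_ofReal.comp continuous_snd).mul
        continuous_const)))
  have hmaps : MapsTo (fun pr : ℝ × ℝ => circleMap y pr.1 pr.2) s (ball (0:ℂ) 1) := by
    rintro ⟨ρ, θ⟩ ⟨hρ, hθ⟩
    apply hballsub
    have : circleMap y ρ θ ∈ sphere y ρ := circleMap_mem_sphere y hρ.1.le θ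
    rw [mem_sphere] at this
    rw [mem_ball, this]
    exact hρ.2
  have hmeass : MeasurableSet s := measurableSet_Ioo.prod measurableSet_Ioo
  have hΦmeas : AEMeasurable
      (fun pr : ℝ × ℝ => ENNReal.ofReal pr.1 * h (circleMap y pr.1 pr.2))
      (volume.restrict s) := by
    refine AEMeasurable.mul ?_ ?_
    · exact (ENNReal.continuous_ofReal.comp continuous_fst).measurable.aemeasurable
    · have hgc : ContinuousOn (fun pr : ℝ × ℝ => g (circleMap y pr.1 pr.2)) s :=
        hg.continuousOn.comp hcmap.continuousOn hmaps
      exact (ENNReal.continuous_rpow_const.measurable.comp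
        (measurable_coe_nnreal_ennreal.comp measurable_nnnorm)).comp_aemeasurable
        (hgc.aemeasurable hmeass)
  have hrestr : (volume : Measure (ℝ × ℝ)).restrict s
      = (volume.restrict (Ioo (0:ℝ) (1/4))).prod (volume.restrict (Ioo (-π) π)) := by
    rw [Measure.prod_restrict, ← Measure.volume_eq_prod, hs]
  have tonelli : ∫⁻ pr in s, ENNReal.ofReal pr.1 * h (circleMap y pr.1 pr.2)
      = ∫⁻ ρ in Ioo (0:ℝ) (1/4), ∫⁻ θ in Ioo (-π) π,
          ENNReal.ofReal ρ * h (circleMap y ρ θ) := by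
    rw [show (∫⁻ pr in s, ENNReal.ofReal pr.1 * h (circleMap y pr.1 pr.2))
        = ∫⁻ pr, ENNReal.ofReal pr.1 * h (circleMap y pr.1 pr.2)
            ∂((volume.restrict (Ioo (0:ℝ) (1/4))).prod (volume.restrict (Ioo (-π) π)))
      from by rw [← hrestr]]
    exact lintegral_prod _ (hrestr ▸ hΦmeas)
  have inner : ∀ ρ ∈ Ioo (0:ℝ) (1/4), ENNReal.ofReal ρ * K
      ≤ ∫⁻ θ in Ioo (-π) π, ENNReal.ofReal ρ * h (circleMap y ρ θ) := by
    intro ρ hρ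
    have heq : (∫⁻ θ in Ioo (-π) π, ENNReal.ofReal ρ * h (circleMap y ρ θ))
        = ∫⁻ θ in Ioc (-π) π, ENNReal.ofReal ρ * h (circleMap y ρ θ) :=
      setLIntegral_congr Ioo_ae_eq_Ioc
    rw [heq, lintegral_const_mul' _ _ ENNReal.ofReal_ne_top]
    exact mul_le_mul_right (circ_mean_pow hp hρ.1 (hcb ρ hρ.2.le) hg) _
  have int_rho : (∫⁻ ρ in Ioo (0:ℝ) (1/4), ENNReal.ofReal ρ) = ENNReal.ofReal (1/32) := by
    have hint : IntegrableOn (fun ρ : ℝ => ρ) (Ioo (0:ℝ) (1/4)) :=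
      (continuous_id.integrableOn_Ioc).mono_set Ioo_subset_Ioc_self
    have hnn : 0 ≤ᵐ[volume.restrict (Ioo (0:ℝ) (1/4))] fun ρ : ℝ => ρ :=
      (ae_restrict_iff' measurableSet_Ioo).2 (Filter.Eventually.of_forall fun x hx => hx.1.le)
    rw [← ofReal_integral_eq_lintegral_ofReal hint hnn]
    congr 1
    rw [setIntegral_congr_set Ioo_ae_eq_Ioc,
      ← intervalIntegral.integral_of_le (by norm_num : (0:ℝ) ≤ 1/4), integral_id]
    norm_num
  have big : ENNReal.ofReal (1/32) * K ≤ ∫⁻ z in ball (0:ℂ) 1, h z :=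
    calc ENNReal.ofReal (1/32) * K
        = (∫⁻ ρ in Ioo (0:ℝ) (1/4), ENNReal.ofReal ρ) * K := by rw [int_rho]
      _ = ∫⁻ ρ in Ioo (0:ℝ) (1/4), ENNReal.ofReal ρ * K :=
          (lintegral_mul_const' K _ hKt).symm
      _ ≤ ∫⁻ ρ in Ioo (0:ℝ) (1/4), ∫⁻ θ in Ioo (-π) π,
            ENNReal.ofReal ρ * h (circleMap y ρ θ) :=
          setLIntegral_mono' measurableSet_Ioo inner
      _ = ∫⁻ pr in s, ENNReal.ofReal pr.1 * h (circleMap y pr.1 pr.2) := tonelli.symm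
      _ ≤ ∫⁻ z in ball y (1/4), h z := polar_lower y h
      _ ≤ ∫⁻ z in ball (0:ℂ) 1, h z :=
          lintegral_mono' (Measure.restrict_mono hballsub le_rfl) le_rfl
  have hcomb : ENNReal.ofReal (1/32) * K = ENNReal.ofReal (π/16) * (‖g y‖₊ : ℝ≥0∞) ^ p := by
    rw [hK, ← mul_assoc, ← ENNReal.ofReal_mul (by norm_num)]
    congr 2
    ring
  have hone : ENNReal.ofReal (16/π) * ENNReal.ofReal (π/16) = 1 := by
    rw [← ENNReal.ofReal_mul (by positivity), show (16/π) * (π/16) = 1 by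
      field_simp]
    exact ENNReal.ofReal_one
  calc (‖g y‖₊ : ℝ≥0∞) ^ p
      = (ENNReal.ofReal (16/π) * ENNReal.ofReal (π/16)) * (‖g y‖₊ : ℝ≥0∞) ^ p := by
        rw [hone, one_mul]
    _ = ENNReal.ofReal (16/π) * (ENNReal.ofReal (π/16) * (‖g y‖₊ : ℝ≥0∞) ^ p) := mul_assoc _ _ _
    _ ≤ ENNReal.ofReal (16/π) * ∫⁻ z in ball (0:ℂ) 1, (‖g z‖₊ : ℝ≥0∞) ^ p :=
        mul_le_mul_right (hcomb ▸ big) _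

/-- Polar coordinates equality on the image of the polar rectangle. -/
lemma polar_image_eq (y : ℂ) (r : ℝ) (h : ℂ → ℝ≥0∞) :
    ∫⁻ z in (fun pr : ℝ × ℝ => circleMap y pr.1 pr.2) '' (Ioo (0:ℝ) r ×ˢ Ioo (-π) π), h z
      = ∫⁻ pr in Ioo (0:ℝ) r ×ˢ Ioo (-π) π,
          ENNReal.ofReal pr.1 * h (circleMap y pr.1 pr.2) := by
  set e := Complex.measurableEquivRealProd with he
  set s : Set (ℝ × ℝ) := Ioo (0:ℝ) r ×ˢ Ioo (-π) π with hs
  set F : ℝ × ℝ → ℝ × ℝ := fun pr => (y.re, y.im) + polarCoord.symm pr with hF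
  have hFcirc : ∀ pr : ℝ × ℝ, e.symm (F pr) = circleMap y pr.1 pr.2 := by
    intro pr
    apply Complex.ext <;>
      simp [hF, he, Complex.measurableEquivRealProd, circleMap,
        Complex.exp_ofReal_mul_I_re, Complex.exp_ofReal_mul_I_im,
        Complex.equivRealProd, Complex.add_re, Complex.add_im]
  have hB' : ∀ pr ∈ s, HasFDerivWithinAt F
      (LinearMap.toContinuousLinearMap ((Matrix.toLin (Module.Basis.finTwoProd ℝ) (Module.Basis.finTwoProd ℝ))
        !![Real.cos pr.2, -pr.1 * Real.sin pr.2; Real.sin pr.2, pr.1 * Real.cos pr.2])) s pr :=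
    fun pr _ => ((hasFDerivAt_polarCoord_symm pr).const_add _).hasFDerivWithinAt
  have hdet : ∀ pr : ℝ × ℝ, (LinearMap.toContinuousLinearMap
      ((Matrix.toLin (Module.Basis.finTwoProd ℝ) (Module.Basis.finTwoProd ℝ))
        !![Real.cos pr.2, -pr.1 * Real.sin pr.2; Real.sin pr.2, pr.1 * Real.cos pr.2])).det
      = pr.1 := by
    intro pr
    conv_rhs => rw [← one_mul pr.1, ← Real.cos_sq_add_sin_sq pr.2]
    simp only [neg_mul, ContinuousLinearMap.det, LinearMap.coe_toContinuousLinearMap,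
      LinearMap.det_toLin, Matrix.det_fin_two_of, sub_neg_eq_add]
    ring
  have hinj : InjOn F s := by
    have h1 : InjOn (⇑polarCoord.symm) polarCoord.target := by
      have := polarCoord.symm.injOn
      rwa [OpenPartialHomeomorph.symm_source] at this
    have hsub : s ⊆ polarCoord.target := by
      rw [polarCoord_target]
      exact prod_mono (Ioo_subset_Ioi_self) le_rfl
    intro a ha b hb hab
    have h2 : polarCoord.symm a = polarCoord.symm b := by
      have h3 := hab
      simp only [hF] at h3
      exact add_left_cancel h3
    exact (h1.mono hsub) ha hb h2
  have hmeass : MeasurableSet s := measurableSet_Ioo.prod measurableSet_Ioo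
  have hFcont : Continuous F := by
    have hps : ⇑polarCoord.symm = fun p : ℝ × ℝ => (p.1 * Real.cos p.2, p.1 * Real.sin p.2) :=
      funext fun p => polarCoord_symm_apply p
    rw [hF, hps]
    exact continuous_const.add ((continuous_fst.mul
      (Real.continuous_cos.comp continuous_snd)).prodMk
      (continuous_fst.mul (Real.continuous_sin.comp continuous_snd)))
  have hFs : MeasurableSet (F '' s) :=
    hmeass.image_of_continuousOn_injOn hFcont.continuousOn hinj
  have himg : (fun pr : ℝ × ℝ => circleMap y pr.1 pr.2) '' s = e.symm '' (F '' s) := by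
    rw [image_image]
    exact image_congr fun pr _ => (hFcirc pr).symm
  have hTs : MeasurableSet ((fun pr : ℝ × ℝ => circleMap y pr.1 pr.2) '' s) := by
    rw [himg]
    exact e.symm.measurableEmbedding.measurableSet_image.2 hFs
  calc ∫⁻ z in (fun pr : ℝ × ℝ => circleMap y pr.1 pr.2) '' s, h z
      = ∫⁻ z, ((fun pr : ℝ × ℝ => circleMap y pr.1 pr.2) '' s).indicator h z :=
        (lintegral_indicator hTs h).symm
    _ = ∫⁻ q, ((fun pr : ℝ × ℝ => circleMap y pr.1 pr.2) '' s).indicator h (e.symm q) :=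
        ((Complex.volume_preserving_equiv_real_prod.symm).lintegral_comp_emb
          e.symm.measurableEmbedding _).symm
    _ = ∫⁻ q, (F '' s).indicator (fun q => h (e.symm q)) q := by
        refine lintegral_congr fun q => ?_
        rw [himg]
        by_cases hq : q ∈ F '' s
        · rw [indicator_of_mem hq, indicator_of_mem (mem_image_of_mem _ hq)]
        · rw [indicator_of_notMem hq, indicator_of_notMem
            (fun hc => hq (e.symm.injective.mem_set_image.1 hc))]
    _ = ∫⁻ q in F '' s, h (e.symm q) := lintegral_indicator hFs _
    _ = ∫⁻ pr in s, ENNReal.ofReal |(LinearMap.toContinuousLinearMap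
          ((Matrix.toLin (Module.Basis.finTwoProd ℝ) (Module.Basis.finTwoProd ℝ))
          !![Real.cos pr.2, -pr.1 * Real.sin pr.2; Real.sin pr.2, pr.1 * Real.cos pr.2])).det|
          * h (e.symm (F pr)) :=
        lintegral_image_eq_lintegral_abs_det_fderiv_mul volume hmeass hB' hinj
          (fun q => h (e.symm q))
    _ = ∫⁻ pr in s, ENNReal.ofReal pr.1 * h (circleMap y pr.1 pr.2) := by
        refine setLIntegral_congr_fun hmeass (fun pr hpr => ?_)
        rw [hdet, abs_of_pos (show (0:ℝ) < pr.1 from hpr.1.1), hFcirc]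

lemma weight_finite {γ : ℝ} (hγ : -2 < γ) :
    (∫⁻ z in closedBall (0:ℂ) (1/2), ENNReal.ofReal (‖z‖ ^ γ)) < ⊤ := by
  have hpos := Real.pi_pos
  set w : ℂ → ℝ≥0∞ := fun z => ENNReal.ofReal (‖z‖ ^ γ) with hw
  set s : Set (ℝ × ℝ) := Ioo (0:ℝ) 1 ×ˢ Ioo (-π) π with hs
  set T : ℝ × ℝ → ℂ := fun pr => circleMap 0 pr.1 pr.2 with hT
  -- covering
  have hcov : closedBall (0:ℂ) (1/2) ⊆ T '' s ∪ Complex.slitPlaneᶜ := by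
    intro z hz
    by_cases hsp : z ∈ Complex.slitPlane
    · left
      have hz0 : z ≠ 0 := by
        intro h0
        rw [h0] at hsp
        simpa [Complex.slitPlane] using hsp
      refine ⟨(‖z‖, Complex.arg z), ⟨⟨?_, ?_⟩, ?_, ?_⟩, ?_⟩
      · exact norm_pos_iff.mpr hz0
      · have := mem_closedBall_zero_iff.1 hz
        linarith
      · exact Complex.neg_pi_lt_arg z
      · refine Complex.arg_lt_pi_iff.2 ?_
        rcases Complex.mem_slitPlane_iff.1 hsp with h | h
        · exact Or.inl h.le
        · exact Or.inr h
      · show circleMap 0 (‖z‖) (Complex.arg z) = z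
        rw [circleMap]
        simpa [Complex.exp_mul_I] using norm_mul_cos_add_sin_mul_I z
    · right; exact hsp
  have hnull : volume (Complex.slitPlaneᶜ) = 0 := by
    have hsub : Complex.slitPlaneᶜ ⊆ (LinearMap.ker Complex.imLm : Submodule ℝ ℂ) := by
      intro z hz
      simp only [mem_compl_iff, Complex.mem_slitPlane_iff, not_or, not_lt, not_ne_iff] at hz
      simpa [LinearMap.mem_ker] using hz.2
    refine measure_mono_null hsub (Measure.addHaar_submodule _ _ ?_)
    intro h
    have : Complex.I ∈ LinearMap.ker Complex.imLm := h ▸ Submodule.mem_top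
    simpa using this
  calc ∫⁻ z in closedBall (0:ℂ) (1/2), w z
      ≤ ∫⁻ z in T '' s ∪ Complex.slitPlaneᶜ, w z :=
        lintegral_mono' (Measure.restrict_mono hcov le_rfl) le_rfl
    _ ≤ (∫⁻ z in T '' s, w z) + ∫⁻ z in Complex.slitPlaneᶜ, w z := lintegral_union_le _ _ _
    _ = ∫⁻ z in T '' s, w z := by rw [setLIntegral_measure_zero _ _ hnull, add_zero]
    _ = ∫⁻ pr in s, ENNReal.ofReal pr.1 * w (circleMap 0 pr.1 pr.2) := polar_image_eq 0 1 w
    _ = ∫⁻ pr in s, ENNReal.ofReal (pr.1 ^ (γ+1)) := by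
        refine setLIntegral_congr_fun (measurableSet_Ioo.prod measurableSet_Ioo)
          (fun pr hpr => ?_)
        have h1 : (0:ℝ) < pr.1 := hpr.1.1
        rw [hw]
        simp only [norm_circleMap_zero, abs_of_pos h1]
        rw [← ENNReal.ofReal_mul h1.le, Real.rpow_add h1, Real.rpow_one]
        ring_nf
    _ < ⊤ := by
      have hmeas : Measurable fun pr : ℝ × ℝ => ENNReal.ofReal (pr.1 ^ (γ+1)) := by
        fun_prop
      have hrestr : (volume : Measure (ℝ × ℝ)).restrict s
          = (volume.restrict (Ioo (0:ℝ) 1)).prod (volume.restrict (Ioo (-π) π)) := by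
        rw [Measure.prod_restrict, ← Measure.volume_eq_prod, hs]
      rw [show (∫⁻ pr in s, ENNReal.ofReal (pr.1 ^ (γ+1)))
          = ∫⁻ pr, ENNReal.ofReal (pr.1 ^ (γ+1))
              ∂((volume.restrict (Ioo (0:ℝ) 1)).prod (volume.restrict (Ioo (-π) π)))
        from by rw [← hrestr]]
      rw [lintegral_prod _ hmeas.aemeasurable]
      simp only [lintegral_const, Measure.restrict_apply_univ, Real.volume_Ioo]
      have hint : IntegrableOn (fun ρ : ℝ => ρ ^ (γ+1)) (Ioo (0:ℝ) 1) := by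
        have := intervalIntegral.intervalIntegrable_rpow' (a := 0) (b := 1)
          (show (-1:ℝ) < γ+1 by linarith)
        exact ((intervalIntegrable_iff_integrableOn_Ioc_of_le zero_le_one).1 this).mono_set
          Ioo_subset_Ioc_self
      calc ∫⁻ ρ in Ioo (0:ℝ) 1, ENNReal.ofReal (ρ ^ (γ+1)) * ENNReal.ofReal (π - -π)
          = (∫⁻ ρ in Ioo (0:ℝ) 1, ENNReal.ofReal (ρ ^ (γ+1))) * ENNReal.ofReal (π - -π) :=
            lintegral_mul_const' _ _ ENNReal.ofReal_ne_top
        _ < ⊤ := ENNReal.mul_lt_top hint.setLIntegral_lt_top ENNReal.ofReal_lt_top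

lemma slice_bound {p γ : ℝ} (hp : 1 ≤ p) (hγ : -2 < γ) :
    ∃ c : ℝ, 0 < c ∧ ∀ g : ℂ → ℂ, DifferentiableOn ℂ g (ball (0:ℂ) 1) →
      ∫⁻ z in ball (0:ℂ) 1, (‖g z‖₊ : ℝ≥0∞) ^ p * ENNReal.ofReal (‖z‖ ^ γ)
        ≤ ENNReal.ofReal c * ∫⁻ z in ball (0:ℂ) 1, (‖g z‖₊ : ℝ≥0∞) ^ p := by
  have hpos := Real.pi_pos
  set M := ∫⁻ z in closedBall (0:ℂ) (1/2), ENNReal.ofReal (‖z‖ ^ γ) with hM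
  have hMfin : M ≠ ⊤ := (weight_finite hγ).ne
  set m := M.toReal with hm
  have hm0 : 0 ≤ m := ENNReal.toReal_nonneg
  set c := (2:ℝ) ^ |γ| + (16/π) * m with hc
  have hc0 : 0 < c := by
    have h1 : (0:ℝ) < (2:ℝ) ^ |γ| := Real.rpow_pos_of_pos (by norm_num) _
    have h2 : 0 ≤ 16/π * m := by positivity
    rw [hc]
    linarith
  refine ⟨c, hc0, fun g hg => ?_⟩
  set I := ∫⁻ z in ball (0:ℂ) 1, (‖g z‖₊ : ℝ≥0∞) ^ p with hI
  by_cases hItop : I = ⊤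
  · rw [hItop, ENNReal.mul_top (by simp [ENNReal.ofReal_eq_zero]; linarith)]
    exact le_top
  set B1 : ℂ → ℝ≥0∞ := (closedBall (0:ℂ) (1/2)).indicator
    (fun z => ENNReal.ofReal (16/π) * I * ENNReal.ofReal (‖z‖ ^ γ)) with hB1
  set B2 : ℂ → ℝ≥0∞ := fun z => ENNReal.ofReal ((2:ℝ) ^ |γ|) * (‖g z‖₊ : ℝ≥0∞) ^ p with hB2
  have hwmeas : Measurable fun z : ℂ => ENNReal.ofReal (‖z‖ ^ γ) := by
    have : (fun z : ℂ => ENNReal.ofReal (‖z‖ ^ γ))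
        = fun z : ℂ => ENNReal.ofReal (‖z‖ ^ γ) := by
      funext z; rfl
    rw [this]; fun_prop
  have hB1meas : Measurable B1 :=
    ((measurable_const.mul hwmeas)).indicator measurableSet_closedBall
  have hpt : ∀ z ∈ ball (0:ℂ) 1,
      (‖g z‖₊ : ℝ≥0∞) ^ p * ENNReal.ofReal (‖z‖ ^ γ) ≤ B1 z + B2 z := by
    intro z hz
    by_cases hz2 : ‖z‖ ≤ 1/2
    · have hsm := submean hp hg hz2
      have hz2' : z ∈ closedBall (0:ℂ) (1/2) := by
        rw [mem_closedBall_zero_iff]; exact hz2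
      refine le_trans (le_trans (mul_le_mul_left hsm _) ?_) (le_add_right le_rfl)
      rw [hB1, indicator_of_mem hz2']
    · have habs1 : ‖z‖ < 1 := by
        rw [mem_ball_zero_iff] at hz; exact hz
      have habs0 : (0:ℝ) < ‖z‖ := by linarith
      have hwb : ‖z‖ ^ γ ≤ (2:ℝ) ^ |γ| := by
        have h1 : ‖z‖ ^ γ ≤ ‖z‖ ^ (-|γ|) :=
          Real.rpow_le_rpow_of_exponent_ge habs0 habs1.le (neg_abs_le γ)
        have h2 : ‖z‖ ^ (-|γ|) = (‖z‖ ^ |γ|)⁻¹ :=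
          Real.rpow_neg habs0.le _
        have h3 : ((1:ℝ)/2) ^ |γ| ≤ ‖z‖ ^ |γ| :=
          Real.rpow_le_rpow (by norm_num) (by linarith) (abs_nonneg γ)
        have h4 : (‖z‖ ^ |γ|)⁻¹ ≤ (((1:ℝ)/2) ^ |γ|)⁻¹ := by
          apply inv_anti₀ _ h3
          positivity
        have h5 : (((1:ℝ)/2) ^ |γ|)⁻¹ = (2:ℝ) ^ |γ| := by
          rw [show (1:ℝ)/2 = 2⁻¹ by norm_num, Real.inv_rpow (by norm_num), inv_inv]
        linarith
      refine le_trans ?_ (le_add_left le_rfl)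
      calc (‖g z‖₊ : ℝ≥0∞) ^ p * ENNReal.ofReal (‖z‖ ^ γ)
          ≤ (‖g z‖₊ : ℝ≥0∞) ^ p * ENNReal.ofReal ((2:ℝ) ^ |γ|) :=
            mul_le_mul_right (ENNReal.ofReal_le_ofReal hwb) _
        _ = B2 z := by rw [hB2, mul_comm]
  calc ∫⁻ z in ball (0:ℂ) 1, (‖g z‖₊ : ℝ≥0∞) ^ p * ENNReal.ofReal (‖z‖ ^ γ)
      ≤ ∫⁻ z in ball (0:ℂ) 1, (B1 z + B2 z) := setLIntegral_mono' measurableSet_ball hpt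
    _ = (∫⁻ z in ball (0:ℂ) 1, B1 z) + ∫⁻ z in ball (0:ℂ) 1, B2 z :=
        lintegral_add_left hB1meas _
    _ ≤ (∫⁻ z, B1 z) + ∫⁻ z in ball (0:ℂ) 1, B2 z := by
        gcongr
        exact Measure.restrict_le_self
    _ = ENNReal.ofReal (16/π) * I * M + ENNReal.ofReal ((2:ℝ) ^ |γ|) * I := by
        rw [hB1, lintegral_indicator measurableSet_closedBall,
          lintegral_const_mul' _ _ (ENNReal.mul_ne_top ENNReal.ofReal_ne_top hItop), hB2,
          lintegral_const_mul' _ _ ENNReal.ofReal_ne_top]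
    _ = ENNReal.ofReal c * I := by
        have hterm : ENNReal.ofReal (16/π) * I * M = ENNReal.ofReal (16/π*m) * I := by
          rw [show ENNReal.ofReal (16/π) * I * M = ENNReal.ofReal (16/π) * M * I by ring,
            ← ENNReal.ofReal_toReal hMfin, ← hm, ← ENNReal.ofReal_mul (by positivity)]
        rw [hterm, hc, ENNReal.ofReal_add (by positivity) (by positivity), add_mul, add_comm]
    _ = ENNReal.ofReal c * ∫⁻ z in ball (0:ℂ) 1, (‖g z‖₊ : ℝ≥0∞) ^ p := rfl

end Helpers

/-- For `1 ≤ p < ∞` and `γ ∈ ℝⁿ` with all `γ_j > −2`, there is `C > 0`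
such that every `f ∈ A^p(𝔻ⁿ)` satisfies `∫_{𝔻ⁿ} |f|^p ∏_j |z_j|^{γ_j} dV ≤ C ∫_{𝔻ⁿ} |f|^p dV`. -/
theorem weighted_Lp_estimate_polydisc (p : ℝ) (hp : 1 ≤ p) (n : ℕ) (hn : 1 ≤ n)
    (γ : Fin n → ℝ) (hγ : ∀ j, -2 < γ j) :
    ∃ C : ℝ, 0 < C ∧ ∀ f : (Fin n → ℂ) → ℂ,
      DifferentiableOn ℂ f (polydisc n) →
      (∫⁻ z in polydisc n, (‖f z‖₊ : ℝ≥0∞) ^ p) ≠ ⊤ →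
      ∫⁻ z in polydisc n,
          (‖f z‖₊ : ℝ≥0∞) ^ p * ENNReal.ofReal (∏ j, ‖z j‖ ^ γ j) ≤
        ENNReal.ofReal C * ∫⁻ z in polydisc n, (‖f z‖₊ : ℝ≥0∞) ^ p := by
  classical
  have hpd : polydisc n = Set.pi univ (fun _ : Fin n => ball (0:ℂ) 1) := by
    ext z
    simp [polydisc, Set.mem_univ_pi, mem_ball_zero_iff]
  have hopen : IsOpen (polydisc n) := by
    rw [hpd]
    exact isOpen_set_pi finite_univ (fun _ _ => isOpen_ball)
  have hmeas_pd : MeasurableSet (polydisc n) := hopen.measurableSet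
  have H : ∀ j : Fin n, ∃ c : ℝ, 0 < c ∧ ∀ g : ℂ → ℂ, DifferentiableOn ℂ g (ball (0:ℂ) 1) →
      ∫⁻ z in ball (0:ℂ) 1, (‖g z‖₊ : ℝ≥0∞) ^ p * ENNReal.ofReal (‖z‖ ^ γ j)
        ≤ ENNReal.ofReal c * ∫⁻ z in ball (0:ℂ) 1, (‖g z‖₊ : ℝ≥0∞) ^ p :=
    fun j => slice_bound hp (hγ j)
  choose cs hcs0 hcs using H
  refine ⟨∏ j, cs j, Finset.prod_pos (fun j _ => hcs0 j), fun f hf _hfin => ?_⟩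
  set NP : (Fin n → ℂ) → ℝ≥0∞ :=
    (polydisc n).indicator (fun z => (‖f z‖₊ : ℝ≥0∞) ^ p) with hNP
  have hNPmeas : Measurable NP := by
    apply measurable_indicator_of_continuousOn hopen
    exact (ENNReal.continuous_rpow_const.comp
      (ENNReal.continuous_coe.comp continuous_nnnorm)).comp_continuousOn hf.continuousOn
  set W : Finset (Fin n) → (Fin n → ℂ) → ℝ≥0∞ :=
    fun s z => ∏ j ∈ s, ENNReal.ofReal (‖z j‖ ^ γ j) with hW
  have hWmeas : ∀ s, Measurable (W s) := by
    intro s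
    apply Finset.measurable_prod
    intro j _
    have : (fun z : Fin n → ℂ => ENNReal.ofReal (‖z j‖ ^ γ j))
        = fun z : Fin n → ℂ => ENNReal.ofReal (‖z j‖ ^ γ j) := by
      funext z; rfl
    rw [this]
    fun_prop
  have hWne : ∀ s z, W s z ≠ ⊤ := by
    intro s z
    rw [hW]
    exact (ENNReal.prod_lt_top (fun j _ => ENNReal.ofReal_lt_top)).ne
  set F : Finset (Fin n) → (Fin n → ℂ) → ℝ≥0∞ := fun s z => NP z * W s z with hF
  have hFmeas : ∀ s, Measurable (F s) := fun s => hNPmeas.mul (hWmeas s)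
  -- the one-coordinate estimate
  have step : ∀ (i : Fin n) (t : Finset (Fin n)), i ∉ t → ∀ x : Fin n → ℂ,
      (∫⁻ y : ℂ, F (insert i t) (Function.update x i y))
        ≤ ENNReal.ofReal (cs i) * ∫⁻ y : ℂ, F t (Function.update x i y) := by
    intro i t hit x
    by_cases hQ : ∀ j, j ≠ i → ‖x j‖ < 1
    · have hmem : ∀ y : ℂ, Function.update x i y ∈ polydisc n ↔ y ∈ ball (0:ℂ) 1 := by
        intro y
        constructor
        · intro h
          have := h i
          rw [Function.update_self] at this
          rwa [mem_ball_zero_iff]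
        · intro hy j
          by_cases hj : j = i
          · subst hj
            rw [Function.update_self]
            rwa [mem_ball_zero_iff] at hy
          · rw [Function.update_of_ne hj]
            exact hQ j hj
      have hupd : Differentiable ℂ (fun y : ℂ => Function.update x i y) := by
        rw [differentiable_pi]
        intro j
        by_cases hj : j = i
        · have h1 : (fun y : ℂ => Function.update x i y j) = fun y => y := by
            funext y
            rw [hj, Function.update_self]
          rw [h1]
          exact differentiable_id
        · have : (fun y : ℂ => Function.update x i y j) = fun _ => x j :=
            funext fun y => Function.update_of_ne hj y x
          rw [this]
          exact differentiable_const _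
      have hgd : DifferentiableOn ℂ (fun y => f (Function.update x i y)) (ball (0:ℂ) 1) :=
        hf.comp hupd.differentiableOn (fun y hy => (hmem y).2 hy)
      have hWt : ∀ y : ℂ, (∏ j ∈ t, ENNReal.ofReal (‖Function.update x i y j‖ ^ γ j))
          = ∏ j ∈ t, ENNReal.ofReal (‖x j‖ ^ γ j) := by
        intro y
        refine Finset.prod_congr rfl fun j hj => ?_
        rw [Function.update_of_ne (ne_of_mem_of_not_mem hj hit)]
      have key1 : ∀ y : ℂ, F (insert i t) (Function.update x i y)
          = W t x * ((ball (0:ℂ) 1).indicator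
              (fun y => (‖f (Function.update x i y)‖₊ : ℝ≥0∞) ^ p
                * ENNReal.ofReal (‖y‖ ^ γ i)) y) := by
        intro y
        by_cases hy : y ∈ ball (0:ℂ) 1
        · simp only [hF, hNP, hW]
          rw [indicator_of_mem hy, indicator_of_mem ((hmem y).2 hy),
            Finset.prod_insert hit, Function.update_self]
          rw [show (∏ j ∈ t, ENNReal.ofReal (‖Function.update x i y j‖ ^ γ j))
            = ∏ j ∈ t, ENNReal.ofReal (‖x j‖ ^ γ j) from hWt y]
          ring
        · simp only [hF, hNP, hW]
          rw [indicator_of_notMem hy, mul_zero,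
            indicator_of_notMem (fun hin => hy ((hmem y).1 hin)), zero_mul]
      have key2 : ∀ y : ℂ, F t (Function.update x i y)
          = W t x * ((ball (0:ℂ) 1).indicator
              (fun y => (‖f (Function.update x i y)‖₊ : ℝ≥0∞) ^ p) y) := by
        intro y
        by_cases hy : y ∈ ball (0:ℂ) 1
        · simp only [hF, hNP, hW]
          rw [indicator_of_mem hy, indicator_of_mem ((hmem y).2 hy)]
          rw [show (∏ j ∈ t, ENNReal.ofReal (‖Function.update x i y j‖ ^ γ j))
            = ∏ j ∈ t, ENNReal.ofReal (‖x j‖ ^ γ j) from hWt y]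
          ring
        · simp only [hF, hNP, hW]
          rw [indicator_of_notMem hy, mul_zero,
            indicator_of_notMem (fun hin => hy ((hmem y).1 hin)), zero_mul]
      calc (∫⁻ y : ℂ, F (insert i t) (Function.update x i y))
          = W t x * ∫⁻ y in ball (0:ℂ) 1,
              (‖f (Function.update x i y)‖₊ : ℝ≥0∞) ^ p
                * ENNReal.ofReal (‖y‖ ^ γ i) := by
            simp_rw [key1]
            rw [lintegral_const_mul' _ _ (hWne t x), lintegral_indicator measurableSet_ball]
        _ ≤ W t x * (ENNReal.ofReal (cs i) * ∫⁻ y in ball (0:ℂ) 1,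
              (‖f (Function.update x i y)‖₊ : ℝ≥0∞) ^ p) :=
            mul_le_mul_right (hcs i _ hgd) _
        _ = ENNReal.ofReal (cs i) * ∫⁻ y : ℂ, F t (Function.update x i y) := by
            simp_rw [key2]
            rw [lintegral_const_mul' _ _ (hWne t x), lintegral_indicator measurableSet_ball]
            ring
    · push_neg at hQ
      obtain ⟨j, hji, hxj⟩ := hQ
      have hzero : ∀ (s : Finset (Fin n)) (y : ℂ), F s (Function.update x i y) = 0 := by
        intro s y
        have hout : Function.update x i y ∉ polydisc n := by
          intro hin
          have := hin j
          rw [Function.update_of_ne hji] at this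
          exact absurd this (not_lt.2 hxj)
        simp only [hF, hNP]
        rw [indicator_of_notMem hout, zero_mul]
      simp only [hzero, lintegral_zero, mul_zero, le_refl]
  -- induction over the coordinates
  have main : ∀ s : Finset (Fin n),
      (∫⁻ z, F s z) ≤ (∏ j ∈ s, ENNReal.ofReal (cs j)) * ∫⁻ z, F ∅ z := by
    intro s
    induction s using Finset.induction_on with
    | empty => simp
    | @insert i t hit IH =>
      set μ : Fin n → Measure ℂ := fun _ => volume with hμ
      set x₀ : Fin n → ℂ := fun _ => 0 with hx₀
      have hdisj : Disjoint (Finset.univ.erase i) {i} :=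
        Finset.disjoint_singleton_right.2 (Finset.notMem_erase i _)
      have huniv : (Finset.univ.erase i) ∪ {i} = Finset.univ := by
        rw [Finset.union_comm, ← Finset.insert_eq, Finset.insert_erase (Finset.mem_univ i)]
      have expand : ∀ s' : Finset (Fin n), (∫⁻ z, F s' z)
          = (∫⋯∫⁻_Finset.univ.erase i, (∫⋯∫⁻_{i}, F s' ∂μ) ∂μ) x₀ := by
        intro s'
        have hvol : (volume : Measure (Fin n → ℂ)) = Measure.pi μ := by
          rw [hμ]
          exact volume_pi
        rw [hvol, lintegral_eq_lmarginal_univ x₀,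
          ← lmarginal_union μ _ (hFmeas s') hdisj, huniv]
      calc (∫⁻ z, F (insert i t) z)
          = (∫⋯∫⁻_Finset.univ.erase i, (∫⋯∫⁻_{i}, F (insert i t) ∂μ) ∂μ) x₀ :=
            expand (insert i t)
        _ ≤ (∫⋯∫⁻_Finset.univ.erase i,
              (fun x => ENNReal.ofReal (cs i) * (∫⋯∫⁻_{i}, F t ∂μ) x) ∂μ) x₀ := by
            refine lmarginal_mono (fun x => ?_) x₀
            rw [lmarginal_singleton, lmarginal_singleton]
            exact step i t hit x
        _ = ENNReal.ofReal (cs i)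
              * (∫⋯∫⁻_Finset.univ.erase i, (∫⋯∫⁻_{i}, F t ∂μ) ∂μ) x₀ := by
            simp only [lmarginal]
            rw [lintegral_const_mul' _ _ ENNReal.ofReal_ne_top]
        _ = ENNReal.ofReal (cs i) * ∫⁻ z, F t z := by rw [← expand t]
        _ ≤ ENNReal.ofReal (cs i)
              * ((∏ j ∈ t, ENNReal.ofReal (cs j)) * ∫⁻ z, F ∅ z) :=
            mul_le_mul_right IH _
        _ = (∏ j ∈ insert i t, ENNReal.ofReal (cs j)) * ∫⁻ z, F ∅ z := by
            rw [Finset.prod_insert hit, mul_assoc]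
  -- identify both sides
  have lhs_eq : (∫⁻ z in polydisc n,
      (‖f z‖₊ : ℝ≥0∞) ^ p * ENNReal.ofReal (∏ j, ‖z j‖ ^ γ j))
      = ∫⁻ z, F Finset.univ z := by
    rw [← lintegral_indicator hmeas_pd]
    refine lintegral_congr fun z => ?_
    by_cases hz : z ∈ polydisc n
    · simp only [hF, hNP, hW]
      rw [indicator_of_mem hz, indicator_of_mem hz,
        ENNReal.ofReal_prod_of_nonneg
          (fun j _ => Real.rpow_nonneg (norm_nonneg _) _)]
    · simp only [hF, hNP, hW]
      rw [indicator_of_notMem hz, indicator_of_notMem hz, zero_mul]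
  have rhs_eq : (∫⁻ z in polydisc n, (‖f z‖₊ : ℝ≥0∞) ^ p) = ∫⁻ z, F ∅ z := by
    rw [← lintegral_indicator hmeas_pd]
    refine lintegral_congr fun z => ?_
    simp only [hF, hNP, hW, Finset.prod_empty, mul_one]
  rw [lhs_eq, rhs_eq, ENNReal.ofReal_prod_of_nonneg (fun j _ => (hcs0 j).le)]
  exact main Finset.univ
end
end

section
/- Let 1 ≤ p < ∞, let n ≥ 1, and let λ ∈ ℕ^n be a multi-index of nonnegative integers. Then there is a constant C > 0 such that for every holomorphic function f on the unit polydisc 𝔻^n with ∫_{𝔻^n} |f|^p dV < ∞, one has ∫_{𝔻^n} |f|^p dV ≤ C ∫_{𝔻^n} |z^λ f(z)|^p dV(z), where z^λ = ∏_{j=1}^n z_j^{λ_j}. -/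
open MeasureTheory Complex Metric Set
open scoped ENNReal NNReal Real

noncomputable section

namespace MonAux

/-- parameter rectangle for polar coordinates -/
def S : Set (ℝ × ℝ) := Set.Ioo (5/8 : ℝ) (7/8) ×ˢ Set.Ioo (-Real.pi) Real.pi

/-- slit annulus -/
def A : Set ℂ := Complex.polarCoord.symm '' S

lemma S_subset : S ⊆ Complex.polarCoord.target := by
  rw [Complex.polarCoord_target]
  rintro ⟨r, θ⟩ ⟨hr, hθ⟩
  exact ⟨lt_trans (by norm_num) hr.1, hθ⟩

lemma measurableSet_S : MeasurableSet S :=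
  (measurableSet_Ioo).prod measurableSet_Ioo

lemma isOpen_A : IsOpen A :=
  Complex.polarCoord.symm.isOpen_image_of_subset_source
    (isOpen_Ioo.prod isOpen_Ioo) S_subset

lemma abs_mem_A {w : ℂ} (hw : w ∈ A) : 5/8 ≤ ‖w‖ ∧ ‖w‖ ≤ 7/8 := by
  obtain ⟨p, hp, rfl⟩ := hw
  rw [Complex.norm_polarCoord_symm, abs_of_pos (lt_trans (by norm_num) hp.1.1)]
  exact ⟨hp.1.1.le, hp.1.2.le⟩

lemma A_subset_ball : A ⊆ ball (0:ℂ) 1 := by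
  intro w hw
  rw [mem_ball_zero_iff]
  exact lt_of_le_of_lt (abs_mem_A hw).2 (by norm_num)

lemma cps_eq (p : ℝ × ℝ) :
    Complex.polarCoord.symm p = Complex.measurableEquivRealProd.symm (polarCoord.symm p) := by
  rw [Complex.polarCoord_symm_apply, polarCoord_symm_apply]
  simp [Complex.measurableEquivRealProd, Complex.ext_iff, Complex.cos_ofReal_re,
    Complex.sin_ofReal_re]

/-- polar change of variables for lintegrals, over the slit annulus. -/
lemma lintegral_A (h : ℂ → ℝ≥0∞) :
    ∫⁻ p in S, ENNReal.ofReal p.1 * h (Complex.polarCoord.symm p) = ∫⁻ w in A, h w := by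
  classical
  set B : ℝ × ℝ → ℝ × ℝ →L[ℝ] ℝ × ℝ := fun p =>
    LinearMap.toContinuousLinearMap (Matrix.toLin (Module.Basis.finTwoProd ℝ) (Module.Basis.finTwoProd ℝ)
      !![Real.cos p.2, -p.1 * Real.sin p.2; Real.sin p.2, p.1 * Real.cos p.2])
  have B_det : ∀ p, (B p).det = p.1 := by
    intro p
    conv_rhs => rw [← one_mul p.1, ← Real.cos_sq_add_sin_sq p.2]
    simp only [B, neg_mul, LinearMap.det_toContinuousLinearMap, LinearMap.det_toLin,
      Matrix.det_fin_two_of, sub_neg_eq_add]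
    ring
  have hder : ∀ p ∈ S, HasFDerivWithinAt polarCoord.symm (B p) S p := fun p _ =>
    (hasFDerivAt_polarCoord_symm p).hasFDerivWithinAt
  have hinj : Set.InjOn polarCoord.symm S := by
    have : S ⊆ polarCoord.target := S_subset
    exact polarCoord.symm.injOn.mono this
  have key := lintegral_image_eq_lintegral_abs_det_fderiv_mul volume measurableSet_S hder hinj
    (fun x => h (Complex.measurableEquivRealProd.symm x))
  have e_mp : MeasurePreserving (Complex.measurableEquivRealProd.symm) volume volume :=
    (Complex.volume_preserving_equiv_real_prod).symm _
  have himg : A = Complex.measurableEquivRealProd.symm '' (polarCoord.symm '' S) := by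
    rw [A, Set.image_image]
    exact Set.image_congr fun p _ => cps_eq p
  calc ∫⁻ p in S, ENNReal.ofReal p.1 * h (Complex.polarCoord.symm p)
      = ∫⁻ p in S, ENNReal.ofReal |(B p).det| *
          h (Complex.measurableEquivRealProd.symm (polarCoord.symm p)) := by
        apply setLIntegral_congr_fun measurableSet_S
        intro p hp
        dsimp only
        rw [B_det, abs_of_pos (lt_trans (by norm_num) hp.1.1), cps_eq]
    _ = ∫⁻ x in polarCoord.symm '' S,
          h (Complex.measurableEquivRealProd.symm x) := (key).symm
    _ = ∫⁻ w in A, h w := by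
        rw [himg]
        exact e_mp.setLIntegral_comp_emb
          (Complex.measurableEquivRealProd.symm.measurableEmbedding) h _

lemma circleMap_eq (r θ : ℝ) : circleMap 0 r θ = Complex.polarCoord.symm (r, θ) := by
  rw [Complex.polarCoord_symm_apply]
  simp [circleMap, Complex.exp_mul_I]

lemma circle_bound {g : ℂ → ℂ} (hg : DifferentiableOn ℂ g (ball 0 1)) {z : ℂ}
    (hz : z ∈ closedBall (0:ℂ) (1/2)) {r : ℝ} (hr : r ∈ Ioo (5/8:ℝ) (7/8)) :
    ENNReal.ofReal (2*Real.pi) * (‖g z‖₊ : ℝ≥0∞) ≤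
      ENNReal.ofReal 7 *
        ∫⁻ θ in Ioo (-Real.pi) Real.pi, (‖g (Complex.polarCoord.symm (r, θ))‖₊ : ℝ≥0∞) := by
  have hr0 : (0:ℝ) < r := lt_trans (by norm_num) hr.1
  have hr1 : r < 1 := lt_trans hr.2 (by norm_num)
  have hcont : ContinuousOn g (ball 0 1) := hg.continuousOn
  have hzn : ‖z‖ ≤ 1/2 := mem_closedBall_zero_iff.mp hz
  have hd : DiffContOnCl ℂ g (ball 0 r) := by
    refine ⟨hg.mono (ball_subset_ball hr1.le), ?_⟩
    rw [closure_ball (0:ℂ) hr0.ne']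
    exact hcont.mono (closedBall_subset_ball hr1)
  have hzball : z ∈ ball (0:ℂ) r := by
    rw [mem_ball_zero_iff]
    exact lt_of_le_of_lt hzn (lt_trans (by norm_num) hr.1)
  have cauchy := hd.circleIntegral_sub_inv_smul hzball
  -- continuity facts
  have hmem : ∀ θ : ℝ, circleMap 0 r θ ∈ ball (0:ℂ) 1 := by
    intro θ
    rw [mem_ball_zero_iff, norm_circleMap_zero, abs_of_pos hr0]
    exact hr1
  have hgc : Continuous fun θ => g (circleMap 0 r θ) :=
    hcont.comp_continuous (continuous_circleMap 0 r) hmem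
  have hsub : ∀ θ : ℝ, (1:ℝ)/8 ≤ ‖circleMap 0 r θ - z‖ := by
    intro θ
    have h1 : ‖circleMap 0 r θ‖ = r := by
      rw [norm_circleMap_zero, abs_of_pos hr0]
    have := norm_sub_norm_le (circleMap 0 r θ) z
    have h58 : (5:ℝ)/8 ≤ r := hr.1.le
    linarith
  have hne : ∀ θ : ℝ, circleMap 0 r θ - z ≠ 0 := by
    intro θ h
    have := hsub θ
    rw [h, norm_zero] at this
    linarith
  set G : ℝ → ℂ := fun θ =>
    deriv (circleMap 0 r) θ • ((circleMap 0 r θ - z)⁻¹ • g (circleMap 0 r θ)) with hG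
  have hGc : Continuous G := by
    simp only [hG, deriv_circleMap]
    exact ((continuous_circleMap 0 r).mul continuous_const).smul
      ((((continuous_circleMap 0 r).sub continuous_const).inv₀ hne).smul hgc)
  -- the main real inequality
  have key : 2 * Real.pi * ‖g z‖ ≤ 7 * ∫ θ in (0:ℝ)..(2*Real.pi), ‖g (circleMap 0 r θ)‖ := by
    have h2pi : (0:ℝ) ≤ 2 * Real.pi := by positivity
    have e1 : 2 * Real.pi * ‖g z‖ = ‖(2 * Real.pi * Complex.I : ℂ) • g z‖ := by
      rw [norm_smul]
      simp [norm_mul, Complex.norm_real,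
        _root_.abs_of_nonneg Real.pi_pos.le]
    rw [e1, ← cauchy]
    have e2 : (∮ w in C(0, r), (w - z)⁻¹ • g w) = ∫ θ in (0:ℝ)..(2*Real.pi), G θ := rfl
    rw [e2]
    calc ‖∫ θ in (0:ℝ)..(2*Real.pi), G θ‖
        ≤ ∫ θ in (0:ℝ)..(2*Real.pi), ‖G θ‖ :=
          intervalIntegral.norm_integral_le_integral_norm h2pi
      _ ≤ ∫ θ in (0:ℝ)..(2*Real.pi), 7 * ‖g (circleMap 0 r θ)‖ := by
          apply intervalIntegral.integral_mono_on h2pi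
            (hGc.norm.intervalIntegrable _ _) ((continuous_const.mul hgc.norm).intervalIntegrable _ _)
          intro θ _
          have hder : ‖deriv (circleMap 0 r) θ‖ = r := by
            rw [deriv_circleMap, norm_mul]
            simp [abs_of_pos hr0]
          have hinv : ‖(circleMap 0 r θ - z)⁻¹‖ ≤ 8 := by
            rw [norm_inv]
            have h8 := hsub θ
            rw [inv_le_comm₀ (by linarith) (by norm_num)]
            linarith
          calc ‖G θ‖ = r * (‖(circleMap 0 r θ - z)⁻¹‖ * ‖g (circleMap 0 r θ)‖) := by
                rw [hG]; simp only [norm_smul, hder]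
            _ ≤ r * (8 * ‖g (circleMap 0 r θ)‖) := by
                apply mul_le_mul_of_nonneg_left _ hr0.le
                exact mul_le_mul_of_nonneg_right hinv (norm_nonneg _)
            _ ≤ 7 * ‖g (circleMap 0 r θ)‖ := by
                have h78 : r ≤ 7/8 := hr.2.le
                nlinarith [norm_nonneg (g (circleMap 0 r θ))]
      _ = 7 * ∫ θ in (0:ℝ)..(2*Real.pi), ‖g (circleMap 0 r θ)‖ :=
          intervalIntegral.integral_const_mul 7 _
  -- shift the interval of integration
  have hper : Function.Periodic (fun θ => ‖g (circleMap 0 r θ)‖) (2*Real.pi) :=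
    (periodic_circleMap 0 r).comp fun w => ‖g w‖
  have hshift : (∫ θ in (0:ℝ)..(2*Real.pi), ‖g (circleMap 0 r θ)‖)
      = ∫ θ in (-Real.pi)..Real.pi, ‖g (circleMap 0 r θ)‖ := by
    have := hper.intervalIntegral_add_eq 0 (-Real.pi)
    rw [zero_add] at this
    have h2 : -Real.pi + 2*Real.pi = Real.pi := by ring
    rw [this, h2]
  rw [hshift] at key
  -- convert to a lintegral
  have hint : IntegrableOn (fun θ => ‖g (circleMap 0 r θ)‖) (Ioc (-Real.pi) Real.pi) volume :=
    hgc.norm.integrableOn_Ioc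
  have hofReal : ENNReal.ofReal (∫ θ in (-Real.pi)..Real.pi, ‖g (circleMap 0 r θ)‖)
      = ∫⁻ θ in Ioo (-Real.pi) Real.pi, (‖g (Complex.polarCoord.symm (r, θ))‖₊ : ℝ≥0∞) := by
    rw [intervalIntegral.integral_of_le (by linarith [Real.pi_pos] : -Real.pi ≤ Real.pi),
      MeasureTheory.ofReal_integral_eq_lintegral_ofReal hint
        (Filter.Eventually.of_forall fun θ => norm_nonneg _),
      ← setLIntegral_congr (Ioo_ae_eq_Ioc (a := -Real.pi) (b := Real.pi))]
    apply setLIntegral_congr_fun measurableSet_Ioo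
    intro θ _
    dsimp only
    rw [ofReal_norm, enorm_eq_nnnorm, circleMap_eq]
  calc ENNReal.ofReal (2*Real.pi) * (‖g z‖₊ : ℝ≥0∞)
      = ENNReal.ofReal (2 * Real.pi * ‖g z‖) := by
        rw [← enorm_eq_nnnorm, ← ofReal_norm, ← ENNReal.ofReal_mul (by positivity)]
    _ ≤ ENNReal.ofReal (7 * ∫ θ in (-Real.pi)..Real.pi, ‖g (circleMap 0 r θ)‖) :=
        ENNReal.ofReal_le_ofReal key
    _ = ENNReal.ofReal 7 *
        ∫⁻ θ in Ioo (-Real.pi) Real.pi, (‖g (Complex.polarCoord.symm (r, θ))‖₊ : ℝ≥0∞) := by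
        rw [ENNReal.ofReal_mul (by norm_num), hofReal]

lemma continuous_cps : Continuous fun p : ℝ × ℝ => Complex.polarCoord.symm p := by
  have : (fun p : ℝ × ℝ => Complex.polarCoord.symm p) =
      fun p : ℝ × ℝ => (p.1 : ℂ) * (Real.cos p.2 + Real.sin p.2 * Complex.I) := by
    funext p; exact Complex.polarCoord_symm_apply p
  rw [this]; fun_prop

lemma cps_mem_ball {p : ℝ × ℝ} (hp : p ∈ S) : Complex.polarCoord.symm p ∈ ball (0:ℂ) 1 := by
  rw [mem_ball_zero_iff, Complex.norm_polarCoord_symm,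
    abs_of_pos (lt_trans (by norm_num) hp.1.1)]
  exact lt_trans hp.1.2 (by norm_num)

lemma pointwise_bound : ∃ K : ℝ≥0∞, K ≠ ⊤ ∧ ∀ g : ℂ → ℂ,
    DifferentiableOn ℂ g (ball 0 1) → ∀ z ∈ closedBall (0:ℂ) (1/2),
    (‖g z‖₊ : ℝ≥0∞) ≤ K * ∫⁻ w in A, (‖g w‖₊ : ℝ≥0∞) := by
  classical
  set c : ℝ≥0∞ := ENNReal.ofReal (5/8) * ENNReal.ofReal (2*Real.pi) * ENNReal.ofReal (1/4)
    with hc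
  have hc0 : c ≠ 0 := by
    rw [hc]
    refine mul_ne_zero (mul_ne_zero ?_ ?_) ?_ <;>
      simp only [ne_eq, ENNReal.ofReal_eq_zero, not_le] <;> positivity
  have hctop : c ≠ ⊤ := by
    rw [hc]
    exact ENNReal.mul_ne_top (ENNReal.mul_ne_top ENNReal.ofReal_ne_top ENNReal.ofReal_ne_top)
      ENNReal.ofReal_ne_top
  refine ⟨c⁻¹ * ENNReal.ofReal 7, ENNReal.mul_ne_top (ENNReal.inv_ne_top.mpr hc0)
    ENNReal.ofReal_ne_top, ?_⟩
  intro g hg z hz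
  set Ψ : ℝ → ℝ≥0∞ := fun r =>
    ∫⁻ θ in Ioo (-Real.pi) Real.pi, (‖g (Complex.polarCoord.symm (r, θ))‖₊ : ℝ≥0∞) with hΨ
  set I₁ : ℝ≥0∞ := ∫⁻ w in A, (‖g w‖₊ : ℝ≥0∞) with hI
  -- integrate the circle bound over r
  have step1 : c * (‖g z‖₊ : ℝ≥0∞) ≤
      ENNReal.ofReal 7 * ∫⁻ r in Ioo (5/8:ℝ) (7/8), ENNReal.ofReal r * Ψ r := by
    have hmono : ∫⁻ r in Ioo (5/8:ℝ) (7/8),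
          (ENNReal.ofReal (5/8) * (ENNReal.ofReal (2*Real.pi) * (‖g z‖₊ : ℝ≥0∞))) ≤
        ∫⁻ r in Ioo (5/8:ℝ) (7/8), ENNReal.ofReal r * (ENNReal.ofReal 7 * Ψ r) := by
      apply lintegral_mono_ae
      rw [ae_restrict_iff' measurableSet_Ioo]
      apply ae_of_all
      intro r hr
      exact mul_le_mul' (ENNReal.ofReal_le_ofReal hr.1.le) (circle_bound hg hz hr)
    rw [lintegral_const, Measure.restrict_apply MeasurableSet.univ, Set.univ_inter,
      Real.volume_Ioo] at hmono
    have h14 : (7:ℝ)/8 - 5/8 = 1/4 := by norm_num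
    rw [h14] at hmono
    calc c * (‖g z‖₊ : ℝ≥0∞)
        = ENNReal.ofReal (5/8) * (ENNReal.ofReal (2*Real.pi) * (‖g z‖₊ : ℝ≥0∞)) *
            ENNReal.ofReal (1/4) := by rw [hc]; ring
      _ ≤ ∫⁻ r in Ioo (5/8:ℝ) (7/8), ENNReal.ofReal r * (ENNReal.ofReal 7 * Ψ r) := hmono
      _ = ∫⁻ r in Ioo (5/8:ℝ) (7/8), ENNReal.ofReal 7 * (ENNReal.ofReal r * Ψ r) := by
          apply lintegral_congr; intro r; ring
      _ = ENNReal.ofReal 7 * ∫⁻ r in Ioo (5/8:ℝ) (7/8), ENNReal.ofReal r * Ψ r :=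
          lintegral_const_mul' _ _ ENNReal.ofReal_ne_top
  -- Tonelli + polar change of variables
  have step2 : (∫⁻ r in Ioo (5/8:ℝ) (7/8), ENNReal.ofReal r * Ψ r) = I₁ := by
    have hgm : AEMeasurable (fun p : ℝ × ℝ => ENNReal.ofReal p.1 *
        (‖g (Complex.polarCoord.symm p)‖₊ : ℝ≥0∞)) (volume.restrict S) := by
      have hco : ContinuousOn (fun p : ℝ × ℝ => g (Complex.polarCoord.symm p)) S :=
        hg.continuousOn.comp continuous_cps.continuousOn fun p hp => cps_mem_ball hp
      exact (measurable_fst.ennreal_ofReal.aemeasurable).mul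
        ((hco.aemeasurable measurableSet_S).enorm
        )
    have hrestrict : (volume : Measure (ℝ × ℝ)).restrict S =
        (volume.restrict (Ioo (5/8:ℝ) (7/8))).prod (volume.restrict (Ioo (-Real.pi) Real.pi)) := by
      rw [Measure.prod_restrict, ← Measure.volume_eq_prod]; rfl
    rw [hI, ← lintegral_A (fun w => (‖g w‖₊ : ℝ≥0∞))]
    rw [hrestrict] at hgm ⊢
    rw [lintegral_prod _ hgm]
    apply lintegral_congr
    intro r
    rw [hΨ]
    exact (lintegral_const_mul' _ _ ENNReal.ofReal_ne_top).symm
  rw [step2] at step1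
  calc (‖g z‖₊ : ℝ≥0∞) = c⁻¹ * (c * (‖g z‖₊ : ℝ≥0∞)) := by
        rw [← mul_assoc, ENNReal.inv_mul_cancel hc0 hctop, one_mul]
    _ ≤ c⁻¹ * (ENNReal.ofReal 7 * I₁) := mul_le_mul_right step1 _
    _ = c⁻¹ * ENNReal.ofReal 7 * I₁ := by rw [mul_assoc]

variable {p : ℝ}

lemma holder_A (hp : 1 ≤ p) {g : ℂ → ℂ} (hg : DifferentiableOn ℂ g (ball 0 1)) :
    (∫⁻ w in A, (‖g w‖₊ : ℝ≥0∞)) ^ p ≤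
      (∫⁻ w in A, (‖g w‖₊ : ℝ≥0∞) ^ p) * (volume A) ^ (p - 1) := by
  have hp0 : (0:ℝ) < p := lt_of_lt_of_le one_pos hp
  set μ := volume.restrict A with hμ
  have hsm : AEStronglyMeasurable g μ :=
    (hg.continuousOn.mono A_subset_ball).aestronglyMeasurable isOpen_A.measurableSet
  have h := eLpNorm_le_eLpNorm_mul_rpow_measure_univ
    (p := (1:ℝ≥0∞)) (q := ENNReal.ofReal p) (by simpa using ENNReal.one_le_ofReal.mpr hp) hsm
  rw [eLpNorm_one_eq_lintegral_enorm,
    eLpNorm_eq_lintegral_rpow_enorm_toReal (by simp [ENNReal.ofReal_eq_zero]; linarith)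
      ENNReal.ofReal_ne_top,
    ENNReal.toReal_ofReal hp0.le, ENNReal.toReal_one, Measure.restrict_apply_univ] at h
  have h2 := ENNReal.rpow_le_rpow h hp0.le
  rw [ENNReal.mul_rpow_of_nonneg _ _ hp0.le, ← ENNReal.rpow_mul, ← ENNReal.rpow_mul,
    one_div, inv_mul_cancel₀ hp0.ne', ENNReal.rpow_one] at h2
  have hexp : (1/1 - p⁻¹) * p = p - 1 := by field_simp
  rwa [hexp] at h2

lemma oneD_one (hp : 1 ≤ p) : ∃ K : ℝ≥0∞, K ≠ ⊤ ∧ ∀ g : ℂ → ℂ,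
    DifferentiableOn ℂ g (ball 0 1) →
    ∫⁻ w in ball (0:ℂ) 1, (‖g w‖₊ : ℝ≥0∞) ^ p ≤
      K * ∫⁻ w in ball (0:ℂ) 1, (‖w * g w‖₊ : ℝ≥0∞) ^ p := by
  have hp0 : (0:ℝ) < p := lt_of_lt_of_le one_pos hp
  obtain ⟨K₀, hK₀, hpt⟩ := pointwise_bound
  have hVtop : volume A ≠ ⊤ :=
    (lt_of_le_of_lt (measure_mono A_subset_ball) measure_ball_lt_top).ne
  set c2 : ℝ≥0∞ := (ENNReal.ofReal 2) ^ p with hc2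
  have hc2top : c2 ≠ ⊤ := by
    rw [hc2]; exact ENNReal.rpow_ne_top_of_nonneg hp0.le ENNReal.ofReal_ne_top
  set K : ℝ≥0∞ := volume (closedBall (0:ℂ) (1/2)) * K₀ ^ p * (volume A) ^ (p-1) * c2 + c2
    with hK
  refine ⟨K, ?_, ?_⟩
  · rw [hK]
    refine ENNReal.add_ne_top.mpr ⟨?_, hc2top⟩
    exact ENNReal.mul_ne_top (ENNReal.mul_ne_top (ENNReal.mul_ne_top
      measure_closedBall_lt_top.ne (ENNReal.rpow_ne_top_of_nonneg hp0.le hK₀))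
      (ENNReal.rpow_ne_top_of_nonneg (by linarith) hVtop)) hc2top
  intro g hg
  set J : ℝ≥0∞ := ∫⁻ w in ball (0:ℂ) 1, (‖w * g w‖₊ : ℝ≥0∞) ^ p with hJ
  -- pointwise: on |w| ≥ 1/2, ‖g w‖^p ≤ c2 * ‖w * g w‖^p
  have hpt2 : ∀ w : ℂ, 1/2 ≤ ‖w‖ → (‖g w‖₊ : ℝ≥0∞) ^ p ≤
      c2 * (‖w * g w‖₊ : ℝ≥0∞) ^ p := by
    intro w hw
    have h1 : ‖g w‖ ≤ 2 * ‖w * g w‖ := by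
      rw [norm_mul]
      nlinarith [norm_nonneg (g w), norm_nonneg w]
    have h2 : (‖g w‖₊ : ℝ≥0∞) ≤ ENNReal.ofReal 2 * (‖w * g w‖₊ : ℝ≥0∞) := by
      rw [← enorm_eq_nnnorm, ← enorm_eq_nnnorm, ← ofReal_norm, ← ofReal_norm,
        ← ENNReal.ofReal_mul (by norm_num)]
      exact ENNReal.ofReal_le_ofReal h1
    calc (‖g w‖₊ : ℝ≥0∞) ^ p ≤ (ENNReal.ofReal 2 * (‖w * g w‖₊ : ℝ≥0∞)) ^ p :=
          ENNReal.rpow_le_rpow h2 hp0.le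
      _ = c2 * (‖w * g w‖₊ : ℝ≥0∞) ^ p := by
          rw [ENNReal.mul_rpow_of_nonneg _ _ hp0.le, hc2]
  -- the two regions
  have hsplit : ∫⁻ w in ball (0:ℂ) 1, (‖g w‖₊ : ℝ≥0∞) ^ p ≤
      (∫⁻ w in closedBall (0:ℂ) (1/2), (‖g w‖₊ : ℝ≥0∞) ^ p) +
      ∫⁻ w in ball (0:ℂ) 1 \ closedBall (0:ℂ) (1/2), (‖g w‖₊ : ℝ≥0∞) ^ p := by
    refine le_trans (lintegral_mono' (Measure.restrict_mono ?_ le_rfl) le_rfl)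
      (lintegral_union_le _ _ _)
    intro w hw
    by_cases h : w ∈ closedBall (0:ℂ) (1/2)
    · exact Or.inl h
    · exact Or.inr ⟨hw, h⟩
  -- region 2
  have hreg2 : ∫⁻ w in ball (0:ℂ) 1 \ closedBall (0:ℂ) (1/2), (‖g w‖₊ : ℝ≥0∞) ^ p ≤
      c2 * J := by
    have : ∫⁻ w in ball (0:ℂ) 1 \ closedBall (0:ℂ) (1/2), (‖g w‖₊ : ℝ≥0∞) ^ p ≤
        ∫⁻ w in ball (0:ℂ) 1 \ closedBall (0:ℂ) (1/2), c2 * (‖w * g w‖₊ : ℝ≥0∞) ^ p := by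
      apply lintegral_mono_ae
      rw [ae_restrict_iff' (measurableSet_ball.diff measurableSet_closedBall)]
      apply ae_of_all
      intro w hw
      apply hpt2
      have := hw.2
      rw [mem_closedBall_zero_iff] at this
      push_neg at this
      exact le_of_lt this
    refine le_trans this ?_
    rw [lintegral_const_mul' _ _ hc2top]
    exact mul_le_mul_right (lintegral_mono' (Measure.restrict_mono diff_subset le_rfl) le_rfl) _
  -- annulus integral bounded by J
  have hannJ : ∫⁻ w in A, (‖g w‖₊ : ℝ≥0∞) ^ p ≤ c2 * J := by
    have : ∫⁻ w in A, (‖g w‖₊ : ℝ≥0∞) ^ p ≤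
        ∫⁻ w in A, c2 * (‖w * g w‖₊ : ℝ≥0∞) ^ p := by
      apply lintegral_mono_ae
      rw [ae_restrict_iff' isOpen_A.measurableSet]
      apply ae_of_all
      intro w hw
      exact hpt2 w (le_trans (by norm_num) (abs_mem_A hw).1)
    refine le_trans this ?_
    rw [lintegral_const_mul' _ _ hc2top]
    exact mul_le_mul_right (lintegral_mono' (Measure.restrict_mono A_subset_ball le_rfl) le_rfl) _
  -- region 1
  have hreg1 : ∫⁻ w in closedBall (0:ℂ) (1/2), (‖g w‖₊ : ℝ≥0∞) ^ p ≤
      volume (closedBall (0:ℂ) (1/2)) * K₀ ^ p * (volume A) ^ (p-1) * (c2 * J) := by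
    set I₁ : ℝ≥0∞ := ∫⁻ w in A, (‖g w‖₊ : ℝ≥0∞) with hI
    have hconst : ∫⁻ w in closedBall (0:ℂ) (1/2), (‖g w‖₊ : ℝ≥0∞) ^ p ≤
        ∫⁻ _ in closedBall (0:ℂ) (1/2), (K₀ * I₁) ^ p := by
      apply lintegral_mono_ae
      rw [ae_restrict_iff' measurableSet_closedBall]
      apply ae_of_all
      intro w hw
      exact ENNReal.rpow_le_rpow (hpt g hg w hw) hp0.le
    rw [setLIntegral_const] at hconst
    calc ∫⁻ w in closedBall (0:ℂ) (1/2), (‖g w‖₊ : ℝ≥0∞) ^ p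
        ≤ (K₀ * I₁) ^ p * volume (closedBall (0:ℂ) (1/2)) := hconst
      _ = volume (closedBall (0:ℂ) (1/2)) * (K₀ ^ p * I₁ ^ p) := by
          rw [ENNReal.mul_rpow_of_nonneg _ _ hp0.le]; ring
      _ ≤ volume (closedBall (0:ℂ) (1/2)) *
            (K₀ ^ p * ((∫⁻ w in A, (‖g w‖₊ : ℝ≥0∞) ^ p) * (volume A) ^ (p-1))) := by
          exact mul_le_mul_right (mul_le_mul_right (holder_A hp hg) _) _
      _ ≤ volume (closedBall (0:ℂ) (1/2)) *
            (K₀ ^ p * ((c2 * J) * (volume A) ^ (p-1))) := by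
          exact mul_le_mul_right (mul_le_mul_right (mul_le_mul_left hannJ _) _) _
      _ = volume (closedBall (0:ℂ) (1/2)) * K₀ ^ p * (volume A) ^ (p-1) * (c2 * J) := by
          ring
  calc ∫⁻ w in ball (0:ℂ) 1, (‖g w‖₊ : ℝ≥0∞) ^ p
      ≤ (∫⁻ w in closedBall (0:ℂ) (1/2), (‖g w‖₊ : ℝ≥0∞) ^ p) +
        ∫⁻ w in ball (0:ℂ) 1 \ closedBall (0:ℂ) (1/2), (‖g w‖₊ : ℝ≥0∞) ^ p := hsplit
    _ ≤ volume (closedBall (0:ℂ) (1/2)) * K₀ ^ p * (volume A) ^ (p-1) * (c2 * J) + c2 * J :=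
        add_le_add hreg1 hreg2
    _ = K * J := by rw [hK]; ring

lemma oneD (hp : 1 ≤ p) (m : ℕ) : ∃ K : ℝ≥0∞, K ≠ ⊤ ∧ ∀ g : ℂ → ℂ,
    DifferentiableOn ℂ g (ball 0 1) →
    ∫⁻ w in ball (0:ℂ) 1, (‖g w‖₊ : ℝ≥0∞) ^ p ≤
      K * ∫⁻ w in ball (0:ℂ) 1, (‖w ^ m * g w‖₊ : ℝ≥0∞) ^ p := by
  induction m with
  | zero =>
    refine ⟨1, ENNReal.one_ne_top, fun g hg => ?_⟩
    simp
  | succ m ih =>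
    obtain ⟨K, hKtop, hK⟩ := ih
    obtain ⟨K₁, hK₁top, hK₁⟩ := oneD_one hp
    refine ⟨K * K₁, ENNReal.mul_ne_top hKtop hK₁top, fun g hg => ?_⟩
    have hgm : DifferentiableOn ℂ (fun w => w ^ m * g w) (ball 0 1) :=
      ((differentiable_pow m).differentiableOn).mul hg
    calc ∫⁻ w in ball (0:ℂ) 1, (‖g w‖₊ : ℝ≥0∞) ^ p
        ≤ K * ∫⁻ w in ball (0:ℂ) 1, (‖w ^ m * g w‖₊ : ℝ≥0∞) ^ p := hK g hg
      _ ≤ K * (K₁ * ∫⁻ w in ball (0:ℂ) 1, (‖w * (w ^ m * g w)‖₊ : ℝ≥0∞) ^ p) :=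
          mul_le_mul_right (hK₁ _ hgm) _
      _ = K * K₁ * ∫⁻ w in ball (0:ℂ) 1, (‖w ^ (m+1) * g w‖₊ : ℝ≥0∞) ^ p := by
          rw [← mul_assoc]
          congr 1
          apply lintegral_congr
          intro w
          congr 3
          ring

variable {n : ℕ}

lemma isOpen_polydisc : IsOpen (polydisc n) := by
  have : polydisc n = Set.pi Set.univ fun _ : Fin n => ball (0:ℂ) 1 := by
    ext z
    simp [polydisc, mem_ball_zero_iff]
  rw [this]
  exact isOpen_set_pi finite_univ fun i _ => isOpen_ball

lemma meas_pw {s : Set (Fin n → ℂ)} [∀ z, Decidable (z ∈ s)] (hs : IsOpen s)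
    {f : (Fin n → ℂ) → ℂ}
    (hf : ContinuousOn f s) : Measurable (s.piecewise f fun _ => (0:ℂ)) := by
  apply measurable_of_isOpen
  intro U hU
  rw [Set.piecewise_preimage, Set.ite]
  apply MeasurableSet.union
  · rw [Set.inter_comm]
    exact (hf.isOpen_inter_preimage hs hU).measurableSet
  · apply MeasurableSet.diff _ hs.measurableSet
    by_cases h0 : (0:ℂ) ∈ U
    · rw [Set.preimage_const_of_mem h0]; exact MeasurableSet.univ
    · rw [Set.preimage_const_of_notMem h0]; exact MeasurableSet.empty

lemma meas_rpow_nnnorm {g : (Fin n → ℂ) → ℂ} (hg : Measurable g) :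
    Measurable fun z => (‖g z‖₊ : ℝ≥0∞) ^ p :=
  (ENNReal.continuous_rpow_const.measurable).comp hg.enorm

lemma diff_update (z : Fin n → ℂ) (j : Fin n) :
    Differentiable ℂ fun w : ℂ => Function.update z j w := by
  apply differentiable_pi.mpr
  intro i
  by_cases h : i = j
  · subst h
    simp only [Function.update_self]
    exact differentiable_id
  · simp only [Function.update_of_ne h]
    exact differentiable_const _

/-- one-coordinate step -/
lemma step (hp : 1 ≤ p) (j : Fin n) (m : ℕ) : ∃ K : ℝ≥0∞, K ≠ ⊤ ∧
    ∀ g : (Fin n → ℂ) → ℂ, Measurable g → DifferentiableOn ℂ g (polydisc n) →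
    ∫⁻ z in polydisc n, (‖g z‖₊ : ℝ≥0∞) ^ p ≤
      K * ∫⁻ z in polydisc n, (‖(z j) ^ m * g z‖₊ : ℝ≥0∞) ^ p := by
  classical
  obtain ⟨K, hKtop, h1⟩ := oneD hp m
  refine ⟨K, hKtop, ?_⟩
  intro g hmg hdg
  set H : (Fin n → ℂ) → ℝ≥0∞ :=
    (polydisc n).indicator fun z => (‖g z‖₊ : ℝ≥0∞) ^ p with hH
  set H' : (Fin n → ℂ) → ℝ≥0∞ :=
    (polydisc n).indicator fun z => (‖(z j) ^ m * g z‖₊ : ℝ≥0∞) ^ p with hH'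
  have hHm : Measurable H := (meas_rpow_nnnorm hmg).indicator isOpen_polydisc.measurableSet
  have hH'm : Measurable H' := by
    apply Measurable.indicator _ isOpen_polydisc.measurableSet
    exact meas_rpow_nnnorm (((measurable_pi_apply j).pow_const m).mul hmg)
  have hmem_update : ∀ (z : Fin n → ℂ) (w : ℂ), (∀ i, i ≠ j → ‖z i‖ < 1) →
      (Function.update z j w ∈ polydisc n ↔ w ∈ ball (0:ℂ) 1) := by
    intro z w hz
    constructor
    · intro h
      have := h j
      rw [Function.update_self] at this
      rwa [mem_ball_zero_iff]
    · intro hw i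
      by_cases h : i = j
      · subst h
        rw [Function.update_self]
        rwa [mem_ball_zero_iff] at hw
      · rw [Function.update_of_ne h]
        exact hz i h
  -- the inner slice inequality
  have inner : ∀ z : Fin n → ℂ, (∫⁻ w, H (Function.update z j w)) ≤
      K * ∫⁻ w, H' (Function.update z j w) := by
    intro z
    by_cases hz : ∀ i, i ≠ j → ‖z i‖ < 1
    · have hindH : ∀ w : ℂ, H (Function.update z j w) =
          (ball (0:ℂ) 1).indicator (fun w => (‖g (Function.update z j w)‖₊ : ℝ≥0∞) ^ p) w := by
        intro w
        by_cases hw : w ∈ ball (0:ℂ) 1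
        · rw [Set.indicator_of_mem hw, hH,
            Set.indicator_of_mem ((hmem_update z w hz).mpr hw)]
        · rw [Set.indicator_of_notMem hw, hH,
            Set.indicator_of_notMem (fun hc => hw ((hmem_update z w hz).mp hc))]
      have hindH' : ∀ w : ℂ, H' (Function.update z j w) =
          (ball (0:ℂ) 1).indicator
            (fun w => (‖w ^ m * g (Function.update z j w)‖₊ : ℝ≥0∞) ^ p) w := by
        intro w
        by_cases hw : w ∈ ball (0:ℂ) 1
        · rw [Set.indicator_of_mem hw, hH',
            Set.indicator_of_mem ((hmem_update z w hz).mpr hw)]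
          rw [Function.update_self]
        · rw [Set.indicator_of_notMem hw, hH',
            Set.indicator_of_notMem (fun hc => hw ((hmem_update z w hz).mp hc))]
      have hgz : DifferentiableOn ℂ (fun w : ℂ => g (Function.update z j w)) (ball 0 1) := by
        apply DifferentiableOn.comp hdg ((diff_update z j).differentiableOn)
        intro w hw
        exact (hmem_update z w hz).mpr hw
      calc (∫⁻ w, H (Function.update z j w))
          = ∫⁻ w in ball (0:ℂ) 1, (‖g (Function.update z j w)‖₊ : ℝ≥0∞) ^ p := by
            simp_rw [hindH]
            exact lintegral_indicator measurableSet_ball _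
        _ ≤ K * ∫⁻ w in ball (0:ℂ) 1,
              (‖w ^ m * g (Function.update z j w)‖₊ : ℝ≥0∞) ^ p := h1 _ hgz
        _ = K * ∫⁻ w, H' (Function.update z j w) := by
            congr 1
            simp_rw [hindH']
            exact (lintegral_indicator measurableSet_ball _).symm
    · push_neg at hz
      obtain ⟨i, hij, hzi⟩ := hz
      have hnot : ∀ w : ℂ, Function.update z j w ∉ polydisc n := by
        intro w hc
        have := hc i
        rw [Function.update_of_ne hij] at this
        exact absurd this (not_lt.mpr hzi)
      have : ∀ w : ℂ, H (Function.update z j w) = 0 := fun w =>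
        Set.indicator_of_notMem (hnot w) _
      simp_rw [this, lintegral_zero]
      exact zero_le
  -- assemble with marginals
  have hvol : (volume : Measure (Fin n → ℂ)) = Measure.pi fun _ => volume :=
    MeasureTheory.volume_pi
  set x₀ : Fin n → ℂ := fun _ => 0 with hx₀
  have hjuniv : j ∈ Finset.univ := Finset.mem_univ j
  calc ∫⁻ z in polydisc n, (‖g z‖₊ : ℝ≥0∞) ^ p
      = ∫⁻ z, H z := (lintegral_indicator isOpen_polydisc.measurableSet _).symm
    _ = (∫⋯∫⁻_Finset.univ, H ∂fun _ => (volume : Measure ℂ)) x₀ := by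
        rw [hvol]; exact lintegral_eq_lmarginal_univ x₀
    _ = (∫⋯∫⁻_(Finset.univ.erase j),
          (fun x => ∫⁻ w, H (Function.update x j w)) ∂fun _ => (volume : Measure ℂ)) x₀ := by
        rw [lmarginal_erase' _ hHm hjuniv]
    _ ≤ (∫⋯∫⁻_(Finset.univ.erase j),
          (fun x => K * ∫⁻ w, H' (Function.update x j w)) ∂fun _ => (volume : Measure ℂ)) x₀ :=
        lmarginal_mono (fun x => inner x) x₀
    _ = K * (∫⋯∫⁻_(Finset.univ.erase j),
          (fun x => ∫⁻ w, H' (Function.update x j w)) ∂fun _ => (volume : Measure ℂ)) x₀ := by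
        rw [lmarginal]
        rw [lintegral_const_mul' _ _ hKtop]
        rfl
    _ = K * (∫⋯∫⁻_Finset.univ, H' ∂fun _ => (volume : Measure ℂ)) x₀ := by
        rw [lmarginal_erase' _ hH'm hjuniv]
    _ = K * ∫⁻ z, H' z := by
        rw [hvol]
        rw [← lintegral_eq_lmarginal_univ x₀]
    _ = K * ∫⁻ z in polydisc n, (‖(z j) ^ m * g z‖₊ : ℝ≥0∞) ^ p := by
        rw [hH', lintegral_indicator isOpen_polydisc.measurableSet]

lemma diff_prod (lam : Fin n → ℕ) (s : Finset (Fin n)) :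
    Differentiable ℂ fun z : Fin n → ℂ => ∏ i ∈ s, z i ^ lam i := by
  classical
  induction s using Finset.induction_on with
  | empty => simpa using differentiable_const (1:ℂ)
  | insert _ _ h ih =>
    rename_i a t
    simp only [Finset.prod_insert h]
    exact ((differentiable_pi.mp differentiable_id a).pow _).mul ih

lemma iter (hp : 1 ≤ p) (lam : Fin n → ℕ) (s : Finset (Fin n)) :
    ∃ K : ℝ≥0∞, K ≠ ⊤ ∧
    ∀ g : (Fin n → ℂ) → ℂ, Measurable g → DifferentiableOn ℂ g (polydisc n) →
    ∫⁻ z in polydisc n, (‖g z‖₊ : ℝ≥0∞) ^ p ≤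
      K * ∫⁻ z in polydisc n, (‖(∏ j ∈ s, z j ^ lam j) * g z‖₊ : ℝ≥0∞) ^ p := by
  classical
  induction s using Finset.induction_on with
  | empty =>
    refine ⟨1, ENNReal.one_ne_top, fun g _ _ => ?_⟩
    simp
  | insert _ _ hj ih =>
    rename_i j s
    obtain ⟨K, hKtop, hK⟩ := ih
    obtain ⟨K₁, hK₁top, hK₁⟩ := step hp j (lam j)
    refine ⟨K * K₁, ENNReal.mul_ne_top hKtop hK₁top, fun g hmg hdg => ?_⟩
    set g' : (Fin n → ℂ) → ℂ := fun z => (∏ i ∈ s, z i ^ lam i) * g z with hg'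
    have hmg' : Measurable g' := by
      apply Measurable.mul _ hmg
      exact Finset.measurable_prod _ fun i _ => (measurable_pi_apply i).pow_const _
    have hdg' : DifferentiableOn ℂ g' (polydisc n) := by
      apply DifferentiableOn.mul _ hdg
      apply Differentiable.differentiableOn
      exact diff_prod lam s
    calc ∫⁻ z in polydisc n, (‖g z‖₊ : ℝ≥0∞) ^ p
        ≤ K * ∫⁻ z in polydisc n, (‖(∏ i ∈ s, z i ^ lam i) * g z‖₊ : ℝ≥0∞) ^ p := hK g hmg hdg
      _ ≤ K * (K₁ * ∫⁻ z in polydisc n, (‖(z j) ^ lam j * g' z‖₊ : ℝ≥0∞) ^ p) :=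
          mul_le_mul_right (hK₁ g' hmg' hdg') _
      _ = K * K₁ * ∫⁻ z in polydisc n, (‖(∏ i ∈ insert j s, z i ^ lam i) * g z‖₊ : ℝ≥0∞) ^ p := by
          rw [← mul_assoc]
          congr 1
          apply lintegral_congr
          intro z
          congr 3
          rw [Finset.prod_insert hj, hg', mul_assoc]

end MonAux

open MonAux

/-- For `1 ≤ p < ∞` and a multi-index `λ ∈ ℕⁿ`, there is `C > 0` such that
every `f ∈ A^p(𝔻ⁿ)` satisfies `∫_{𝔻ⁿ} |f|^p dV ≤ C ∫_{𝔻ⁿ} |z^λ f|^p dV`. -/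
theorem monomial_multiplier_estimate_polydisc (p : ℝ) (hp : 1 ≤ p) (n : ℕ) (hn : 1 ≤ n)
    (lam : Fin n → ℕ) :
    ∃ C : ℝ, 0 < C ∧ ∀ f : (Fin n → ℂ) → ℂ,
      DifferentiableOn ℂ f (polydisc n) →
      (∫⁻ z in polydisc n, (‖f z‖₊ : ℝ≥0∞) ^ p) ≠ ⊤ →
      ∫⁻ z in polydisc n, (‖f z‖₊ : ℝ≥0∞) ^ p ≤
        ENNReal.ofReal C *
          ∫⁻ z in polydisc n, (‖(∏ j, z j ^ lam j) * f z‖₊ : ℝ≥0∞) ^ p := by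
  classical
  obtain ⟨K, hKtop, hiter⟩ := iter hp lam Finset.univ
  refine ⟨K.toReal + 1, by positivity, ?_⟩
  intro f hdf _
  set f' : (Fin n → ℂ) → ℂ := (polydisc n).piecewise f fun _ => 0 with hf'
  have heq : Set.EqOn f' f (polydisc n) := fun z hz => Set.piecewise_eq_of_mem _ _ _ hz
  have hmf' : Measurable f' := meas_pw isOpen_polydisc hdf.continuousOn
  have hdf' : DifferentiableOn ℂ f' (polydisc n) := hdf.congr heq
  have hKle : K ≤ ENNReal.ofReal (K.toReal + 1) := by
    conv_lhs => rw [← ENNReal.ofReal_toReal hKtop]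
    exact ENNReal.ofReal_le_ofReal (by linarith [ENNReal.toReal_nonneg (a := K)])
  have e1 : ∫⁻ z in polydisc n, (‖f z‖₊ : ℝ≥0∞) ^ p
      = ∫⁻ z in polydisc n, (‖f' z‖₊ : ℝ≥0∞) ^ p := by
    apply setLIntegral_congr_fun isOpen_polydisc.measurableSet
    intro z hz
    dsimp only
    rw [heq hz]
  have e2 : ∫⁻ z in polydisc n, (‖(∏ j, z j ^ lam j) * f' z‖₊ : ℝ≥0∞) ^ p
      = ∫⁻ z in polydisc n, (‖(∏ j, z j ^ lam j) * f z‖₊ : ℝ≥0∞) ^ p := by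
    apply setLIntegral_congr_fun isOpen_polydisc.measurableSet
    intro z hz
    dsimp only
    rw [heq hz]
  calc ∫⁻ z in polydisc n, (‖f z‖₊ : ℝ≥0∞) ^ p
      = ∫⁻ z in polydisc n, (‖f' z‖₊ : ℝ≥0∞) ^ p := e1
    _ ≤ K * ∫⁻ z in polydisc n, (‖(∏ j, z j ^ lam j) * f' z‖₊ : ℝ≥0∞) ^ p :=
        hiter f' hmf' hdf'
    _ ≤ ENNReal.ofReal (K.toReal + 1) *
          ∫⁻ z in polydisc n, (‖(∏ j, z j ^ lam j) * f z‖₊ : ℝ≥0∞) ^ p := by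
        rw [← e2]
        exact mul_le_mul_left hKle _
end
end

section
/- Let n ≥ 2, let B ∈ M_n(ℤ) with det B > 0 and B^{-1} ⪰ 0 entrywise, let A = adj B, and let Γ = {σ_ν : ν ∈ ℤ^n} where σ_ν(z) = exp(2πi A^{-1}ν) ⊙ z acts on the punctured polydisc (𝔻*)^n. Then for α ∈ ℤ^n, the monomial φ_α(z) = z^α satisfies σ_ν^♯ φ_α = φ_α for all ν ∈ ℤ^n (i.e., φ_α is a Γ-invariant holomorphic function on (𝔻*)^n) if and only if there exists β ∈ ℤ^n with α = βA − 𝟙. -/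
open MeasureTheory Complex
open scoped ENNReal NNReal

noncomputable section

/-- The `k`-th entry of `A⁻¹ ν` for an integer vector `ν` (computed over `ℚ`). -/
def gammaCoef {n : ℕ} (A : Matrix (Fin n) (Fin n) ℤ) (ν : Fin n → ℤ) (k : Fin n) : ℚ :=
  ∑ l, (A.map (Int.cast : ℤ → ℚ))⁻¹ k l * (ν l : ℚ)

namespace MonomialAux
open Matrix

variable {n : ℕ}

lemma exp_prod_eq (c : Fin n → ℂ) (α : Fin n → ℤ) (z : Fin n → ℂ) :
    (∏ k, Complex.exp (c k)) * ∏ k, (Complex.exp (c k) * z k) ^ α k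
      = Complex.exp (∑ k, ((α k : ℂ) + 1) * c k) * ∏ k, z k ^ α k := by
  have h1 : ∀ k ∈ Finset.univ, (Complex.exp (c k) * z k) ^ α k
      = Complex.exp ((α k : ℂ) * c k) * z k ^ α k := by
    intro k _
    rw [mul_zpow, ← Complex.exp_int_mul]
  rw [Finset.prod_congr rfl h1, Finset.prod_mul_distrib, ← Complex.exp_sum,
    ← Complex.exp_sum, ← mul_assoc, ← Complex.exp_add, ← Finset.sum_add_distrib]
  congr 2
  exact Finset.sum_congr rfl fun k _ => by ring

lemma hS (α : Fin n → ℤ) (γ : Fin n → ℚ) :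
    2 * (Real.pi : ℂ) * Complex.I * ((∑ k, ((α k : ℚ) + 1) * γ k : ℚ) : ℂ)
      = ∑ k, ((α k : ℂ) + 1) * (2 * (Real.pi : ℂ) * Complex.I * (γ k : ℂ)) := by
  push_cast
  rw [Finset.mul_sum]
  exact Finset.sum_congr rfl fun k _ => by ring

lemma key_alg (B : Matrix (Fin n) (Fin n) ℤ) (hdet : B.det ≠ 0) (α : Fin n → ℤ) :
    (∀ ν : Fin n → ℤ, ∃ m : ℤ,
        ∑ k, ((α k : ℚ) + 1) * gammaCoef B.adjugate ν k = (m : ℚ)) ↔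
      ∃ β : Fin n → ℤ, ∀ k, α k = (∑ l, β l * B.adjugate l k) - 1 := by
  classical
  set Aq : Matrix (Fin n) (Fin n) ℚ := B.adjugate.map (Int.cast : ℤ → ℚ) with hAqdef
  have hdetAq : IsUnit Aq.det := by
    have h1 : Aq.det = ((B.adjugate.det : ℤ) : ℚ) := by
      rw [hAqdef]
      exact (RingHom.map_det (Int.castRingHom ℚ) B.adjugate).symm
    rw [isUnit_iff_ne_zero, h1, Matrix.det_adjugate]
    exact_mod_cast pow_ne_zero _ hdet
  set v : Fin n → ℚ := fun k => (α k : ℚ) + 1 with hv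
  have hSdot : ∀ ν : Fin n → ℤ,
      (∑ k, v k * gammaCoef B.adjugate ν k)
        = Matrix.vecMul v Aq⁻¹ ⬝ᵥ (fun l => ((ν l : ℚ))) := by
    intro ν
    rw [show (∑ k, v k * gammaCoef B.adjugate ν k)
        = v ⬝ᵥ (Aq⁻¹ *ᵥ fun l => ((ν l : ℚ))) from rfl,
      Matrix.dotProduct_mulVec]
  constructor
  · intro h
    choose m hm using fun j : Fin n => h (Pi.single j 1)
    have hrow : Matrix.vecMul v Aq⁻¹ = fun j => (m j : ℚ) := by
      funext j
      have h2 := hm j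
      rw [hSdot (Pi.single j 1)] at h2
      rw [← h2]
      have h3 : (fun l => (((Pi.single j 1 : Fin n → ℤ) l : ℚ))) = Pi.single j (1 : ℚ) := by
        funext l; simp [Pi.single_apply]
      rw [h3, dotProduct_single, mul_one]
    have hv2 : v = Matrix.vecMul (fun j => (m j : ℚ)) Aq := by
      rw [← hrow, Matrix.vecMul_vecMul, Matrix.nonsing_inv_mul Aq hdetAq, Matrix.vecMul_one]
    refine ⟨m, fun k => ?_⟩
    have h4 : (α k : ℚ) + 1 = ∑ l, (m l : ℚ) * ((B.adjugate l k : ℤ) : ℚ) := by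
      have h5 := congrFun hv2 k
      simpa [hv, Matrix.vecMul, dotProduct, hAqdef, Matrix.map_apply] using h5
    have h6 : (α k : ℚ) = ((∑ l, m l * B.adjugate l k : ℤ) : ℚ) - 1 := by
      push_cast
      linarith [h4]
    exact_mod_cast h6
  · rintro ⟨β, hβ⟩
    intro ν
    refine ⟨∑ l, β l * ν l, ?_⟩
    have hv2 : v = Matrix.vecMul (fun l => (β l : ℚ)) Aq := by
      funext k
      have h1 : ((α k : ℤ) : ℚ) = (((∑ l, β l * B.adjugate l k) - 1 : ℤ) : ℚ) := by
        exact_mod_cast congrArg (Int.cast : ℤ → ℚ) (hβ k)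
      push_cast at h1
      simp only [hv, Matrix.vecMul, dotProduct, hAqdef, Matrix.map_apply]
      linarith [h1]
    have hrow : Matrix.vecMul v Aq⁻¹ = fun l => (β l : ℚ) := by
      rw [hv2, Matrix.vecMul_vecMul, Matrix.mul_nonsing_inv Aq hdetAq, Matrix.vecMul_one]
    rw [hSdot ν, hrow]
    simp only [dotProduct]
    push_cast
    rfl

end MonomialAux

/-- With `A = adj B` and `σ_ν(z) = exp(2πi A⁻¹ν) ⊙ z` acting on the
punctured polydisc `(𝔻*)ⁿ`, the monomial `φ_α(z) = z^α` satisfies `σ_ν^♯ φ_α = φ_α` for all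
`ν ∈ ℤⁿ` (note `det σ_ν' = ∏_k exp(2πi (A⁻¹ν)_k)`) if and only if `α = βA − 𝟙` for some
`β ∈ ℤⁿ`. -/
theorem monomial_invariant_iff {n : ℕ} (hn : 2 ≤ n) (B : Matrix (Fin n) (Fin n) ℤ)
    (hdet : 0 < B.det)
    (hinv : ∀ i j, 0 ≤ (B.map (Int.cast : ℤ → ℚ))⁻¹ i j)
    (α : Fin n → ℤ) :
    (∀ ν : Fin n → ℤ, ∀ z : Fin n → ℂ,
      (∀ k, z k ≠ 0 ∧ ‖z k‖ < 1) →
      (∏ k, Complex.exp (2 * (Real.pi : ℂ) * Complex.I * (gammaCoef B.adjugate ν k : ℂ))) *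
        ∏ k, (Complex.exp (2 * (Real.pi : ℂ) * Complex.I *
          (gammaCoef B.adjugate ν k : ℂ)) * z k) ^ α k
        = ∏ k, z k ^ α k) ↔
    ∃ β : Fin n → ℤ, ∀ k, α k = (∑ l, β l * B.adjugate l k) - 1 := by
  rw [← MonomialAux.key_alg B hdet.ne' α]
  constructor
  · intro h ν
    have hz : ∀ k : Fin n, ((fun _ : Fin n => (1:ℂ)/2) k ≠ 0 ∧
        ‖(fun _ : Fin n => (1:ℂ)/2) k‖ < 1) := by
      intro k
      constructor
      · norm_num
      · rw [show ((1:ℂ)/2) = ((1/2 : ℝ) : ℂ) by norm_num, Complex.norm_real,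
          Real.norm_of_nonneg (by norm_num : (0:ℝ) ≤ 1/2)]
        norm_num
    have h0 := h ν (fun _ => (1:ℂ)/2) hz
    rw [MonomialAux.exp_prod_eq] at h0
    have hP : (∏ _k : Fin n, ((1:ℂ)/2) ^ α _k) ≠ 0 :=
      Finset.prod_ne_zero_iff.mpr fun k _ => zpow_ne_zero _ (by norm_num)
    have hE := mul_right_cancel₀ hP (h0.trans (one_mul _).symm)
    rw [Complex.exp_eq_one_iff] at hE
    obtain ⟨m, hm⟩ := hE
    refine ⟨m, ?_⟩
    rw [← MonomialAux.hS α (gammaCoef B.adjugate ν)] at hm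
    have h2πI : (2 * (Real.pi : ℂ) * Complex.I) ≠ 0 := by
      refine mul_ne_zero (mul_ne_zero two_ne_zero ?_) Complex.I_ne_zero
      exact_mod_cast Real.pi_ne_zero
    have h7 := mul_left_cancel₀ h2πI (hm.trans (mul_comm _ _))
    exact_mod_cast h7
  · intro h ν z hz
    obtain ⟨m, hm⟩ := h ν
    rw [MonomialAux.exp_prod_eq]
    have h8 : (∑ k, ((α k : ℂ) + 1) * (2 * (Real.pi : ℂ) * Complex.I *
        (gammaCoef B.adjugate ν k : ℂ))) = (m : ℂ) * (2 * (Real.pi : ℂ) * Complex.I) := by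
      rw [← MonomialAux.hS α (gammaCoef B.adjugate ν), hm]
      push_cast
      ring
    rw [h8, Complex.exp_int_mul_two_pi_mul_I, one_mul]
end
end
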